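/- arXiv:2205.13610 — 6 statements merged into one kernel-verified Lean document; each statement's English description precedes it below -/
import Mathlib

section
/- Let ρ be a density matrix on ℂ^d with robustness of coherence R(ρ) in a fixed orthonormal basis {|x⟩}, and let {V_a}_{a∈A}, |A| = d, be diagonal unitaries in that basis satisfying the character orthogonality (1/d)Σ_a (V_a)_{xx}\overline{(V_a)_{yy}} = δ_{xy}. Then the maximal average discrimination probability max_{POVM {M_a}} (1/d) Σ_a Tr(V_a ρ V_a† M_a) equals (1 + R(ρ))/d. -/
open scoped Matrix ComplexOrder

lemma psd_smul_nonneg {n : Type*} [Fintype n] {M : Matrix n n ℂ} (hM : M.PosSemidef)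
    {c : ℂ} (hc : 0 ≤ c) : (c • M).PosSemidef := by
  have hcs : star c = c := by
    rw [Complex.star_def, Complex.conj_eq_iff_im]
    have := (Complex.le_def.mp hc).2
    simpa using this.symm
  constructor
  · show (c • M)ᴴ = c • M
    rw [Matrix.conjTranspose_smul, hM.1.eq, hcs]
  · intro x
    exact (hM.smul hc).2 x

/-- Let `ρ` be a density matrix on `ℂ^d` with robustness of coherence `R` (given in its
SDP form via `IsGreatest`), and let `{V a}_{a ∈ A}`, `|A| = d`, be diagonal unitaries
satisfying character orthogonality. Then the maximal average discrimination probability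
`max_{POVM} (1/d) Σ_a Tr(V_a ρ V_a† M_a)` equals `(1 + R)/d`. -/
theorem bv_performance_eq_robustness {d : ℕ} (hd : 0 < d) (A : Type) [Fintype A]
    (hA : Fintype.card A = d)
    (ρ : Matrix (Fin d) (Fin d) ℂ) (hρ : ρ.PosSemidef) (hρtr : ρ.trace = 1)
    (V : A → Matrix (Fin d) (Fin d) ℂ)
    (hVdiag : ∀ a x y, x ≠ y → V a x y = 0)
    (hVunit : ∀ a, V a ∈ Matrix.unitaryGroup (Fin d) ℂ)
    (horth : ∀ x y : Fin d,
      (1 / d : ℂ) * ∑ a, V a x x * star (V a y y) = if x = y then 1 else 0)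
    (R : ℝ)
    (hR : IsGreatest {s : ℝ | ∃ X : Matrix (Fin d) (Fin d) ℂ,
        X.PosSemidef ∧ (∀ x, X x x = 1) ∧ (s : ℂ) = (ρ * X).trace - 1} R) :
    IsGreatest {p : ℝ | ∃ M : A → Matrix (Fin d) (Fin d) ℂ,
        (∀ a, (M a).PosSemidef) ∧ (∑ a, M a = 1) ∧
        (p : ℂ) = (1 / d : ℂ) * ∑ a, (V a * ρ * (V a)ᴴ * M a).trace}
      ((1 + R) / d) := by
  have hd' : (d : ℂ) ≠ 0 := Nat.cast_ne_zero.mpr hd.ne'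
  have hdR : (0 : ℝ) < d := Nat.cast_pos.mpr hd
  have hVV : ∀ a, (V a)ᴴ * V a = 1 := by
    intro a
    have := (hVunit a).1
    rwa [Matrix.star_eq_conjTranspose] at this
  have hVu : ∀ a (x : Fin d), star (V a x x) * V a x x = 1 := by
    intro a x
    have h2 : ((V a)ᴴ * V a) x x = (1 : Matrix (Fin d) (Fin d) ℂ) x x := by rw [hVV a]
    rw [Matrix.mul_apply] at h2
    rw [Finset.sum_eq_single x (fun b _ hb => by
        rw [Matrix.conjTranspose_apply, hVdiag a b x hb, star_zero, zero_mul])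
      (fun h => absurd (Finset.mem_univ x) h)] at h2
    rw [Matrix.conjTranspose_apply] at h2
    rw [h2, Matrix.one_apply_eq]
  constructor
  · -- membership: the POVM M a = (1/d) • V a X V aᴴ achieves (1+R)/d
    obtain ⟨X, hX, hXdiag, hXR⟩ := hR.1
    have hc : (0 : ℂ) ≤ (1 / d : ℂ) := by
      have h0 : (0 : ℝ) ≤ (1 / d : ℝ) := by positivity
      have := Complex.real_le_real.mpr h0
      simpa using this
    refine ⟨fun a => (1 / d : ℂ) • (V a * X * (V a)ᴴ), fun a =>
      psd_smul_nonneg (hX.mul_mul_conjTranspose_same (V a)) hc, ?_, ?_⟩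
    · ext x y
      have hent : ∀ a, (V a * X * (V a)ᴴ) x y = V a x x * X x y * star (V a y y) := by
        intro a
        have h1 : (V a * X) x y = V a x x * X x y := by
          rw [Matrix.mul_apply]
          exact Finset.sum_eq_single x (fun b _ hb => by
              rw [hVdiag a x b (Ne.symm hb), zero_mul])
            (fun h => absurd (Finset.mem_univ x) h)
        have h2 : (V a * X * (V a)ᴴ) x y = (V a * X) x y * star (V a y y) := by
          rw [Matrix.mul_apply]
          rw [Finset.sum_eq_single y (fun b _ hb => by
              rw [Matrix.conjTranspose_apply, hVdiag a y b (Ne.symm hb), star_zero, mul_zero])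
            (fun h => absurd (Finset.mem_univ y) h)]
          rw [Matrix.conjTranspose_apply]
        rw [h2, h1]
      have key : (∑ a, ((1 / d : ℂ) • (V a * X * (V a)ᴴ))) x y
          = X x y * ((1 / d : ℂ) * ∑ a, V a x x * star (V a y y)) := by
        rw [Matrix.sum_apply, Finset.mul_sum, Finset.mul_sum]
        refine Finset.sum_congr rfl fun a _ => ?_
        rw [Matrix.smul_apply, hent a, smul_eq_mul]; ring
      rw [key, horth x y]
      by_cases hxy : x = y
      · subst hxy; simp [Matrix.one_apply_eq, hXdiag x]
      · simp [Matrix.one_apply_ne hxy, hxy]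
    · have htr : ∀ a : A, (V a * ρ * (V a)ᴴ * ((1 / d : ℂ) • (V a * X * (V a)ᴴ))).trace
          = (1 / d : ℂ) * (ρ * X).trace := by
        intro a
        rw [Matrix.mul_smul, Matrix.trace_smul, smul_eq_mul]
        congr 1
        have e1 : V a * ρ * (V a)ᴴ * (V a * X * (V a)ᴴ) = V a * (ρ * X) * (V a)ᴴ := by
          simp only [Matrix.mul_assoc]
          rw [← Matrix.mul_assoc (V a)ᴴ (V a), hVV a, Matrix.one_mul]
        rw [e1, Matrix.trace_mul_comm, ← Matrix.mul_assoc, hVV a, Matrix.one_mul]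
      push_cast
      rw [Finset.sum_congr rfl (fun a _ => htr a), Finset.sum_const, Finset.card_univ, hA, nsmul_eq_mul]
      have hTr : (ρ * X).trace = 1 + (R : ℂ) := by rw [hXR]; ring
      rw [hTr]
      field_simp
  · -- upper bound
    rintro p ⟨M, hMpsd, hMsum, hMp⟩
    set X : Matrix (Fin d) (Fin d) ℂ := ∑ a, (V a)ᴴ * M a * V a with hXdef
    have hXpsd : X.PosSemidef :=
      Finset.sum_induction _ Matrix.PosSemidef (fun _ _ ha hb => ha.add hb)
        (Matrix.PosSemidef.zero) (fun a _ => (hMpsd a).conjTranspose_mul_mul_same (V a))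
    have hXdiag : ∀ x, X x x = 1 := by
      intro x
      have hent : ∀ a, ((V a)ᴴ * M a * V a) x x = M a x x := by
        intro a
        have h1 : ((V a)ᴴ * M a) x x = star (V a x x) * M a x x := by
          rw [Matrix.mul_apply]
          exact Finset.sum_eq_single x (fun b _ hb => by
              rw [Matrix.conjTranspose_apply, hVdiag a b x hb, star_zero, zero_mul])
            (fun h => absurd (Finset.mem_univ x) h)
        have h2 : ((V a)ᴴ * M a * V a) x x = ((V a)ᴴ * M a) x x * V a x x := by
          rw [Matrix.mul_apply]
          exact Finset.sum_eq_single x (fun b _ hb => by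
              rw [hVdiag a b x hb, mul_zero])
            (fun h => absurd (Finset.mem_univ x) h)
        rw [h2, h1]
        calc star (V a x x) * M a x x * V a x x
            = star (V a x x) * V a x x * M a x x := by ring
          _ = M a x x := by rw [hVu a x, one_mul]
      have hms : (∑ a, M a) x x = (1 : Matrix (Fin d) (Fin d) ℂ) x x := by rw [hMsum]
      rw [Matrix.sum_apply] at hms
      rw [hXdef, Matrix.sum_apply, Finset.sum_congr rfl (fun a _ => hent a), hms,
        Matrix.one_apply_eq]
    have htrX : (ρ * X).trace = ∑ a, (V a * ρ * (V a)ᴴ * M a).trace := by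
      rw [hXdef, Matrix.mul_sum, Matrix.trace_sum]
      refine Finset.sum_congr rfl fun a _ => ?_
      rw [Matrix.trace_mul_comm ρ ((V a)ᴴ * M a * V a),
        Matrix.trace_mul_comm (V a * ρ * (V a)ᴴ) (M a),
        show (V a)ᴴ * M a * V a * ρ = (V a)ᴴ * (M a * (V a * ρ)) by
          simp only [Matrix.mul_assoc],
        Matrix.trace_mul_comm ((V a)ᴴ) (M a * (V a * ρ))]
      simp only [Matrix.mul_assoc]
    have hsum : (∑ a, (V a * ρ * (V a)ᴴ * M a).trace) = (d : ℂ) * p := by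
      rw [hMp]; field_simp
    have hs : (d * p - 1 : ℝ) ∈ {s : ℝ | ∃ X : Matrix (Fin d) (Fin d) ℂ,
        X.PosSemidef ∧ (∀ x, X x x = 1) ∧ (s : ℂ) = (ρ * X).trace - 1} := by
      refine ⟨X, hXpsd, hXdiag, ?_⟩
      push_cast
      rw [htrX, hsum]
    have hle := hR.2 hs
    rw [le_div_iff₀ hdR, mul_comm]
    linarith
end

section
/- For a pure state |φ⟩ = Σ_x c_x |x⟩ on ℂ^d, the robustness of coherence equals the ℓ1-norm of coherence: R(|φ⟩⟨φ|) = Σ_{x≠y} |c_x||c_y| = (Σ_x |c_x|)² − 1. -/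
open scoped Matrix ComplexOrder

/-- Off-diagonal entries of a PSD matrix with unit diagonal have norm at most 1. -/
lemma aux_offdiag_bound {d : ℕ} {X : Matrix (Fin d) (Fin d) ℂ} (hX : X.PosSemidef)
    (hdiag : ∀ i, X i i = 1) (x y : Fin d) : ‖X x y‖ ≤ 1 := by
  rcases eq_or_ne x y with rfl | hxy
  · simp [hdiag x]
  rcases eq_or_ne (X x y) 0 with hz | hz
  · simp [hz]
  set z := X x y with hzdef
  have hr : (‖z‖ : ℂ) ≠ 0 := by
    simpa using (norm_ne_zero_iff.mpr hz)
  set v : Fin d → ℂ := Pi.single x (z / ‖z‖) + Pi.single y (-1) with hv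
  have hQ := hX.dotProduct_mulVec_nonneg v
  have h1 : X *ᵥ v = (fun i => X i x * (z / ‖z‖)) + fun i => X i y * (-1) := by
    ext i
    simp [hv, Matrix.mulVec_add, Matrix.mulVec_single, div_eq_mul_inv]
  have hxyh : X y x = star z := by
    rw [hzdef, hX.1.apply y x]
  have key : (starRingEnd ℂ) z * z = ((‖z‖ : ℂ)) ^ 2 := by
    rw [mul_comm, Complex.mul_conj]
    norm_cast
    simp [Complex.normSq_eq_norm_sq]
  have h2 : star v ⬝ᵥ (X *ᵥ v) = ((2 - 2 * ‖z‖ : ℝ) : ℂ) := by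
    rw [h1, hv]
    rw [star_add]
    have hs1 : star (Pi.single x (z / (‖z‖:ℂ))) = (Pi.single x ((starRingEnd ℂ) z / (‖z‖:ℂ)) : Fin d → ℂ) := by
      rw [← Pi.single_star]
      congr 1
      simp [star_div₀, Complex.star_def, Complex.conj_ofReal]
    have hs2 : star (Pi.single y (-1 : ℂ)) = (Pi.single y (-1 : ℂ) : Fin d → ℂ) := by
      rw [← Pi.single_star]
      simp
    rw [hs1, hs2, add_dotProduct, single_dotProduct, single_dotProduct]
    simp only [Pi.add_apply, hdiag x, hdiag y, hxyh]
    push_cast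
    field_simp
    ring_nf
    rw [key]
    have hra : ((‖z‖ : ℝ) : ℂ) ≠ 0 := by
      simpa using hr
    field_simp
    have hst : star z = (starRingEnd ℂ) z := rfl
    linear_combination (-2 : ℂ) * key - X x y * hst
  rw [h2] at hQ
  rw [Complex.zero_le_real] at hQ
  linarith

/-- For a pure state `|φ⟩ = Σ_x c_x |x⟩` on `ℂ^d`, the robustness of coherence (in its
SDP form) equals the `ℓ1`-norm of coherence:
`R(|φ⟩⟨φ|) = Σ_{x≠y} |c_x||c_y| = (Σ_x |c_x|)² − 1`. -/
theorem robustness_pure_state_eq_l1 {d : ℕ} (hd : 0 < d) (c : Fin d → ℂ)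
    (hc : ∑ x, ‖c x‖ ^ 2 = 1) :
    IsGreatest {s : ℝ | ∃ X : Matrix (Fin d) (Fin d) ℂ,
        X.PosSemidef ∧ (∀ x, X x x = 1) ∧
        (s : ℂ) = ((Matrix.of fun x y => c x * star (c y)) * X).trace - 1}
      (∑ x, ∑ y, if x ≠ y then ‖c x‖ * ‖c y‖ else 0) ∧
    (∑ x, ∑ y, if x ≠ y then ‖c x‖ * ‖c y‖ else 0) = (∑ x, ‖c x‖) ^ 2 - 1 := by
  classical
  set S : ℝ := ∑ x, ‖c x‖ with hS
  -- the combinatorial identity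
  have heq : (∑ x, ∑ y, if x ≠ y then ‖c x‖ * ‖c y‖ else 0) = S ^ 2 - 1 := by
    have hrow : ∀ x : Fin d, (∑ y, if x ≠ y then ‖c x‖ * ‖c y‖ else 0)
        = ‖c x‖ * S - ‖c x‖ ^ 2 := by
      intro x
      have hterm : ∀ y : Fin d, (if x ≠ y then ‖c x‖ * ‖c y‖ else 0)
          = ‖c x‖ * ‖c y‖ - (if x = y then ‖c x‖ * ‖c y‖ else 0) := by
        intro y; by_cases h : x = y <;> simp [h]
      rw [Finset.sum_congr rfl fun y _ => hterm y, Finset.sum_sub_distrib,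
        Finset.sum_ite_eq]
      simp [hS, Finset.mul_sum, pow_two]
    rw [Finset.sum_congr rfl fun x _ => hrow x, Finset.sum_sub_distrib, hc,
      ← Finset.sum_mul, ← hS, pow_two]
  -- trace formula
  have htr : ∀ X : Matrix (Fin d) (Fin d) ℂ,
      ((Matrix.of fun x y => c x * star (c y)) * X).trace
        = ∑ x, ∑ y, c x * star (c y) * X y x := by
    intro X
    simp [Matrix.trace, Matrix.diag, Matrix.mul_apply]
  rw [heq]
  refine ⟨⟨?_, ?_⟩, rfl⟩
  · -- membership: the phase matrix achieves the bound
    set u : Fin d → ℂ := fun x => if c x = 0 then 1 else c x / ‖c x‖ with hu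
    have keyc : ∀ x, c x * (starRingEnd ℂ) (c x) = ((‖c x‖ : ℂ)) ^ 2 := by
      intro x
      rw [Complex.mul_conj]
      norm_cast
      simp [Complex.normSq_eq_norm_sq]
    have hu1 : ∀ x, c x * star (u x) = (‖c x‖ : ℂ) := by
      intro x
      by_cases h : c x = 0
      · simp [hu, h]
      · have hr : (‖c x‖ : ℂ) ≠ 0 := by simpa using (norm_ne_zero_iff.mpr h)
        simp only [hu, h, if_false, star_div₀, Complex.star_def, Complex.conj_ofReal]
        rw [← mul_div_assoc, div_eq_iff hr, keyc x]
        ring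
    have hu2 : ∀ x, star (c x) * u x = (‖c x‖ : ℂ) := by
      intro x
      have := congrArg star (hu1 x)
      simpa [mul_comm, Complex.star_def, Complex.conj_ofReal] using this
    have hunorm : ∀ x, u x * star (u x) = 1 := by
      intro x
      by_cases h : c x = 0
      · simp [hu, h]
      · have hr : (‖c x‖ : ℂ) ≠ 0 := by simpa using (norm_ne_zero_iff.mpr h)
        simp only [hu, h, if_false, star_div₀, Complex.star_def, Complex.conj_ofReal]
        rw [div_mul_div_comm, keyc x, div_eq_one_iff_eq (mul_ne_zero hr hr)]
        ring
    refine ⟨Matrix.of fun x y => u x * star (u y), ?_, ?_, ?_⟩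
    · set A : Matrix (Fin 1) (Fin d) ℂ := Matrix.of fun _ y => star (u y) with hA
      have : (Matrix.of fun x y => u x * star (u y)) = Aᴴ * A := by
        ext x y
        simp [hA, Matrix.mul_apply, Matrix.conjTranspose_apply]
      rw [this]
      exact Matrix.posSemidef_conjTranspose_mul_self A
    · intro x
      simpa using hunorm x
    · rw [htr]
      have : ∀ x y : Fin d,
          c x * star (c y) * (Matrix.of fun x y => u x * star (u y)) y x
            = ((‖c x‖ : ℂ)) * ((‖c y‖ : ℂ)) := by
        intro x y
        have : c x * star (c y) * (u y * star (u x))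
            = (c x * star (u x)) * (star (c y) * u y) := by ring
        simp only [Matrix.of_apply]
        rw [this, hu1 x, hu2 y]
      rw [Finset.sum_congr rfl fun x _ => Finset.sum_congr rfl fun y _ => this x y]
      rw [← Finset.sum_mul_sum]
      push_cast [hS]
      ring
  · -- upper bound
    rintro s ⟨X, hXpsd, hXdiag, hs⟩
    have hXb : ∀ x y, ‖X x y‖ ≤ 1 := aux_offdiag_bound hXpsd hXdiag
    have htrace : ((Matrix.of fun x y => c x * star (c y)) * X).trace
        = ((s + 1 : ℝ) : ℂ) := by
      rw [show ((s + 1 : ℝ) : ℂ) = (s : ℂ) + 1 by push_cast; ring, hs]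
      ring
    have hb : ‖((Matrix.of fun x y => c x * star (c y)) * X).trace‖ ≤ S ^ 2 := by
      rw [htr X]
      calc ‖∑ x, ∑ y, c x * star (c y) * X y x‖
          ≤ ∑ x, ∑ y, ‖c x * star (c y) * X y x‖ :=
            (norm_sum_le _ _).trans
              (Finset.sum_le_sum fun x _ => norm_sum_le _ _)
        _ ≤ ∑ x, ∑ y, ‖c x‖ * ‖c y‖ := by
            refine Finset.sum_le_sum fun x _ => Finset.sum_le_sum fun y _ => ?_
            rw [norm_mul, norm_mul, norm_star]
            calc ‖c x‖ * ‖c y‖ * ‖X y x‖ ≤ ‖c x‖ * ‖c y‖ * 1 := by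
                  have := hXb y x
                  have h0 : 0 ≤ ‖c x‖ * ‖c y‖ := by positivity
                  nlinarith
              _ = ‖c x‖ * ‖c y‖ := by ring
        _ = S ^ 2 := by rw [← Finset.sum_mul_sum, ← hS, pow_two]
    rw [htrace] at hb
    have : |s + 1| ≤ S ^ 2 := by
      rwa [Complex.norm_real, Real.norm_eq_abs] at hb
    have := (abs_le.mp this).2
    linarith
end

section
/- For any density matrix ρ on ℂ^d, the robustness of coherence satisfies R(ρ) ≤ C_{ℓ1}(ρ) = Σ_{x≠y}|ρ_{xy}|, with the maximum possible value d−1 attained exactly when ρ is a maximally coherent pure state, i.e., ρ = |ψ⟩⟨ψ| with |⟨x|ψ⟩| = 1/√d for all x. -/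
open scoped Matrix ComplexOrder InnerProductSpace

noncomputable section

/-- Gram decomposition of a PSD complex matrix. -/
lemma gram_decomp {d : ℕ} {M : Matrix (Fin d) (Fin d) ℂ} (hM : M.PosSemidef) :
    ∃ b : Fin d → EuclideanSpace ℂ (Fin d), ∀ x y, M x y = ⟪b x, b y⟫_ℂ := by
  obtain ⟨B, hB⟩ : ∃ B : Matrix (Fin d) (Fin d) ℂ, M = Bᴴ * B := by
    open scoped MatrixOrder in exact CStarAlgebra.nonneg_iff_eq_star_mul_self.mp hM.nonneg
  refine ⟨fun x => (WithLp.equiv 2 _).symm (fun k => B k x), fun x y => ?_⟩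
  simp [hB, Matrix.mul_apply, PiLp.inner_apply, RCLike.inner_apply, Matrix.conjTranspose_apply, mul_comm]

lemma feasible_le {d : ℕ} (ρ : Matrix (Fin d) (Fin d) ℂ)
    (hρtr : ρ.trace = 1) {s : ℝ}
    (hs : ∃ X : Matrix (Fin d) (Fin d) ℂ,
        X.PosSemidef ∧ (∀ x, X x x = 1) ∧ (s : ℂ) = (ρ * X).trace - 1) :
    s ≤ ∑ x, ∑ y, if x ≠ y then ‖ρ x y‖ else 0 := by
  obtain ⟨X, hX, hXd, hsX⟩ := hs
  obtain ⟨c, hc⟩ := gram_decomp hX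
  have hcn : ∀ x, ‖c x‖ = 1 := by
    intro x
    have h1 : ⟪c x, c x⟫_ℂ = 1 := by rw [← hc, hXd]
    have h2 := inner_self_eq_norm_sq_to_K (𝕜 := ℂ) (c x)
    rw [h1] at h2
    have h3 : ‖c x‖^2 = (1:ℝ) := by
      apply RCLike.ofReal_injective (K := ℂ)
      push_cast
      exact h2.symm
    nlinarith [norm_nonneg (c x)]
  have hXb : ∀ x y, ‖X x y‖ ≤ 1 := by
    intro x y
    rw [hc]
    calc ‖⟪c x, c y⟫_ℂ‖ ≤ ‖c x‖ * ‖c y‖ := norm_inner_le_norm _ _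
    _ = 1 := by rw [hcn, hcn, mul_one]
  -- trace computation
  have htr : (ρ * X).trace = ∑ x, ∑ y, ρ x y * X y x := by
    simp [Matrix.trace, Matrix.diag, Matrix.mul_apply]
  have hsplit : ∀ x : Fin d, ∑ y, ρ x y * X y x
      = (∑ y, if x ≠ y then ρ x y * X y x else 0) + ρ x x := by
    intro x
    have : ∀ y, ρ x y * X y x
        = (if x ≠ y then ρ x y * X y x else 0) + (if x = y then ρ x y * X y x else 0) := by
      intro y; by_cases h : x = y <;> simp [h]
    rw [Finset.sum_congr rfl (fun y _ => this y), Finset.sum_add_distrib,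
      Finset.sum_ite_eq, if_pos (Finset.mem_univ x), hXd, mul_one]
  have hdiag : ∑ x, ρ x x = 1 := hρtr
  have hkey : (s : ℂ) = ∑ x, ∑ y, if x ≠ y then ρ x y * X y x else 0 := by
    rw [hsX, htr, Finset.sum_congr rfl (fun x _ => hsplit x), Finset.sum_add_distrib, hdiag]
    ring
  have hre : s = ∑ x, ∑ y, (if x ≠ y then ρ x y * X y x else 0).re := by
    have := congrArg Complex.re hkey
    simpa [Complex.re_sum] using this
  rw [hre]
  refine Finset.sum_le_sum fun x _ => Finset.sum_le_sum fun y _ => ?_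
  by_cases h : x = y
  · simp [h]
  · simp only [h, Ne, not_false_iff, if_true]
    calc (ρ x y * X y x).re ≤ ‖ρ x y * X y x‖ := Complex.re_le_norm _
    _ = ‖ρ x y‖ * ‖X y x‖ := norm_mul _ _
    _ ≤ ‖ρ x y‖ * 1 := by
        exact mul_le_mul_of_nonneg_left (hXb y x) (norm_nonneg _)
    _ = ‖ρ x y‖ := mul_one _

lemma max_mem {d : ℕ} (hd : 0 < d) (ψ : Fin d → ℂ)
    (hψ : ∀ x, ‖ψ x‖ = 1 / Real.sqrt d) :
    ∃ X : Matrix (Fin d) (Fin d) ℂ, X.PosSemidef ∧ (∀ x, X x x = 1) ∧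
      (((d : ℝ) - 1 : ℝ) : ℂ) =
        ((Matrix.of fun x y => ψ x * star (ψ y)) * X).trace - 1 := by
  have hd0 : (d : ℝ) ≠ 0 := Nat.cast_ne_zero.mpr hd.ne'
  have hdC : (d : ℂ) ≠ 0 := Nat.cast_ne_zero.mpr hd.ne'
  have hψsq : ∀ x, ψ x * star (ψ x) = ((1 / d : ℝ) : ℂ) := by
    intro x
    rw [Complex.star_def, Complex.mul_conj]
    congr 1
    rw [Complex.normSq_eq_norm_sq, hψ]
    rw [div_pow, one_pow, Real.sq_sqrt (Nat.cast_nonneg d)]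
  refine ⟨Matrix.of fun x y => (d : ℂ) * (ψ x * star (ψ y)), Matrix.posSemidef_iff_dotProduct_mulVec.mpr ⟨?_, ?_⟩, ?_, ?_⟩
  · -- Hermitian
    ext x y
    simp only [Matrix.conjTranspose_apply, Matrix.of_apply, star_mul', star_star, star_natCast]
    ring
  · -- quadratic form
    intro v
    set z : ℂ := ∑ y, star (ψ y) * v y with hz
    have hform : star v ⬝ᵥ (Matrix.of fun x y => (d : ℂ) * (ψ x * star (ψ y))) *ᵥ v
        = (d : ℂ) * (star z * z) := by
      have hstarz : star z = ∑ x, star (v x) * ψ x := by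
        rw [hz, star_sum]
        refine Finset.sum_congr rfl fun x _ => ?_
        simp [star_mul', mul_comm]
      rw [hstarz, hz, Finset.sum_mul_sum]
      simp only [dotProduct, Matrix.mulVec, Matrix.of_apply, Pi.star_apply,
        Finset.mul_sum]
      refine Finset.sum_congr rfl fun x _ => Finset.sum_congr rfl fun y _ => ?_
      ring
    rw [hform]
    have : star z * z = ((Complex.normSq z : ℝ) : ℂ) := by
      rw [Complex.star_def, mul_comm, Complex.mul_conj]
    rw [this, ← Complex.ofReal_natCast, ← Complex.ofReal_mul]
    rw [Complex.zero_le_real]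
    exact mul_nonneg (Nat.cast_nonneg d) (Complex.normSq_nonneg z)
  · -- diagonal
    intro x
    rw [Matrix.of_apply, hψsq, ← Complex.ofReal_natCast, ← Complex.ofReal_mul]
    rw [mul_one_div, div_self hd0, Complex.ofReal_one]
  · -- trace
    have htr : ((Matrix.of fun x y => ψ x * star (ψ y)) *
        (Matrix.of fun x y => (d : ℂ) * (ψ x * star (ψ y)))).trace
        = ∑ x, ∑ y, (ψ x * star (ψ x)) * ((d:ℂ) * (ψ y * star (ψ y))) := by
      rw [Matrix.trace]
      simp only [Matrix.diag, Matrix.mul_apply, Matrix.of_apply]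
      refine Finset.sum_congr rfl fun x _ => Finset.sum_congr rfl fun y _ => ?_
      ring
    rw [htr]
    have : ∀ x : Fin d, ∑ y : Fin d, (ψ x * star (ψ x)) * ((d:ℂ) * (ψ y * star (ψ y)))
        = 1 := by
      intro x
      simp only [hψsq]
      rw [Finset.sum_const, Finset.card_univ, Fintype.card_fin, nsmul_eq_mul]
      push_cast
      field_simp
    rw [Finset.sum_congr rfl fun x _ => this x, Finset.sum_const, Finset.card_univ,
      Fintype.card_fin, nsmul_eq_mul, mul_one]
    push_cast
    ring

lemma l1_of_max {d : ℕ} (hd : 0 < d) (ψ : Fin d → ℂ)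
    (hψ : ∀ x, ‖ψ x‖ = 1 / Real.sqrt d) :
    ∑ x, ∑ y, (if x ≠ y then ‖(Matrix.of fun x y => ψ x * star (ψ y)) x y‖ else 0)
      = (d : ℝ) - 1 := by
  have hd0 : (0:ℝ) < (d : ℝ) := by exact_mod_cast hd
  have hval : ∀ x y : Fin d, ‖(Matrix.of fun x y => ψ x * star (ψ y)) x y‖ = 1/(d:ℝ) := by
    intro x y
    rw [Matrix.of_apply, norm_mul, norm_star, hψ, hψ, div_mul_div_comm, one_mul,
      Real.mul_self_sqrt (le_of_lt hd0)]
  have hinner : ∀ x : Fin d, ∑ y, (if x ≠ y then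
      ‖(Matrix.of fun x y => ψ x * star (ψ y)) x y‖ else 0) = (d:ℝ) * (1/d) - 1/d := by
    intro x
    have hterm : ∀ y, (if x ≠ y then ‖(Matrix.of fun x y => ψ x * star (ψ y)) x y‖ else 0)
        = 1/(d:ℝ) - (if x = y then 1/(d:ℝ) else 0) := by
      intro y
      rw [hval]
      by_cases h : x = y <;> simp [h]
    rw [Finset.sum_congr rfl fun y _ => hterm y, Finset.sum_sub_distrib, Finset.sum_const,
      Finset.card_univ, Fintype.card_fin, Finset.sum_ite_eq, if_pos (Finset.mem_univ x),
      nsmul_eq_mul]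
  rw [Finset.sum_congr rfl fun x _ => hinner x, Finset.sum_const, Finset.card_univ,
    Fintype.card_fin, nsmul_eq_mul]
  field_simp

lemma sum_eq_of_le {ι : Type*} [Fintype ι] {f g : ι → ℝ} (hle : ∀ i, f i ≤ g i)
    (heq : ∑ i, f i = ∑ i, g i) : ∀ i, f i = g i := by
  have h0 : ∑ i, (g i - f i) = 0 := by rw [Finset.sum_sub_distrib, heq, sub_self]
  have h1 := (Finset.sum_eq_zero_iff_of_nonneg
    (fun i _ => sub_nonneg.mpr (hle i))).mp h0
  intro i
  have := h1 i (Finset.mem_univ i)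
  linarith

lemma max_structure {d : ℕ} (hd : 0 < d) (ρ : Matrix (Fin d) (Fin d) ℂ)
    (hρ : ρ.PosSemidef) (hρtr : ρ.trace = 1)
    (hS : (d : ℝ) - 1 ≤ ∑ x, ∑ y, if x ≠ y then ‖ρ x y‖ else 0) :
    ∃ ψ : Fin d → ℂ, (∀ x, ‖ψ x‖ = 1 / Real.sqrt d) ∧
        ρ = Matrix.of fun x y => ψ x * star (ψ y) := by
  have hd0 : (0:ℝ) < (d : ℝ) := by exact_mod_cast hd
  obtain ⟨b, hb⟩ := gram_decomp hρ
  set q : Fin d → ℝ := fun x => ‖b x‖ with hqdef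
  have hxx : ∀ x, ρ x x = ((q x ^ 2 : ℝ) : ℂ) := by
    intro x
    rw [hb, inner_self_eq_norm_sq_to_K]
    norm_cast
  have hsumq : ∑ x, q x ^ 2 = 1 := by
    have h1 : ρ.trace = ((∑ x, q x ^ 2 : ℝ) : ℂ) := by
      rw [Matrix.trace, Complex.ofReal_sum]
      exact Finset.sum_congr rfl fun x _ => hxx x
    rw [hρtr] at h1
    have := h1.symm
    exact_mod_cast this
  have habs : ∀ x y, ‖ρ x y‖ ≤ q x * q y := by
    intro x y
    rw [hb]
    exact norm_inner_le_norm _ _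
  set T : ℝ := ∑ x, q x with hT
  -- value of the pair sum
  have hP : ∑ x, ∑ y, (if x ≠ y then q x * q y else 0) = T ^ 2 - 1 := by
    have hinner : ∀ x : Fin d, ∑ y, (if x ≠ y then q x * q y else 0)
        = q x * T - q x ^ 2 := by
      intro x
      have hterm : ∀ y, (if x ≠ y then q x * q y else 0)
          = q x * q y - (if x = y then q x * q y else 0) := by
        intro y; by_cases h : x = y <;> simp [h]
      rw [Finset.sum_congr rfl fun y _ => hterm y, Finset.sum_sub_distrib,
        ← Finset.mul_sum, Finset.sum_ite_eq, if_pos (Finset.mem_univ x), ← hT, sq]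
    rw [Finset.sum_congr rfl fun x _ => hinner x, Finset.sum_sub_distrib,
      ← Finset.sum_mul, hsumq, ← hT, sq]
  -- sum of squared differences
  have hI : ∑ x, ∑ y, (q x - q y) ^ 2 = 2 * (d:ℝ) - 2 * T ^ 2 := by
    have hinner : ∀ x : Fin d, ∑ y, (q x - q y) ^ 2
        = (d:ℝ) * q x ^ 2 - 2 * q x * T + 1 := by
      intro x
      have hterm : ∀ y : Fin d, (q x - q y) ^ 2
          = q x ^ 2 - 2 * q x * q y + q y ^ 2 := fun y => by ring
      rw [Finset.sum_congr rfl fun y _ => hterm y, Finset.sum_add_distrib,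
        Finset.sum_sub_distrib, Finset.sum_const, Finset.card_univ, Fintype.card_fin,
        hsumq, nsmul_eq_mul]
      have : ∑ y, 2 * q x * q y = 2 * q x * T := by rw [Finset.mul_sum]
      rw [this]
    rw [Finset.sum_congr rfl fun x _ => hinner x, Finset.sum_add_distrib,
      Finset.sum_sub_distrib, Finset.sum_const, Finset.card_univ, Fintype.card_fin,
      nsmul_eq_mul, mul_one, ← Finset.mul_sum, hsumq]
    have h2 : ∑ x, 2 * q x * T = 2 * T ^ 2 := by
      have : ∀ x, 2 * q x * T = (2 * T) * q x := fun x => by ring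
      rw [Finset.sum_congr rfl fun x _ => this x, ← Finset.mul_sum, ← hT]
      ring
    rw [h2]
    ring
  have hInn : 0 ≤ ∑ x, ∑ y, (q x - q y) ^ 2 :=
    Finset.sum_nonneg fun x _ => Finset.sum_nonneg fun y _ => sq_nonneg _
  have hT2le : T ^ 2 ≤ d := by nlinarith [hI, hInn]
  -- chain of inequalities
  have hSP : (∑ x, ∑ y, if x ≠ y then ‖ρ x y‖ else 0)
      ≤ ∑ x, ∑ y, (if x ≠ y then q x * q y else 0) := by
    refine Finset.sum_le_sum fun x _ => Finset.sum_le_sum fun y _ => ?_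
    by_cases h : x = y
    · simp [h]
    · simp only [ne_eq, h, not_false_eq_true, if_true]
      exact habs x y
  have hSeq : (∑ x, ∑ y, if x ≠ y then ‖ρ x y‖ else 0)
      = ∑ x, ∑ y, (if x ≠ y then q x * q y else 0) := by
    have h1 : ∑ x, ∑ y, (if x ≠ y then q x * q y else 0) ≤ (d:ℝ) - 1 := by
      rw [hP]; linarith
    linarith
  have hT2 : T ^ 2 = d := by
    have := hS.trans (hSeq.le.trans hP.le)
    nlinarith
  -- q is constant
  have hIzero : ∑ x, ∑ y, (q x - q y) ^ 2 = 0 := by rw [hI, hT2]; ring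
  have hqc : ∀ x y : Fin d, q x = q y := by
    have h1 := (Finset.sum_eq_zero_iff_of_nonneg
      (fun x _ => Finset.sum_nonneg fun y _ => sq_nonneg _)).mp hIzero
    intro x y
    have h2 := (Finset.sum_eq_zero_iff_of_nonneg
      (fun y _ => sq_nonneg _)).mp (h1 x (Finset.mem_univ x)) y (Finset.mem_univ y)
    have := sq_eq_zero_iff.mp h2
    linarith
  have hq : ∀ x, q x = 1 / Real.sqrt d := by
    intro x
    have hsq : (d:ℝ) * q x ^ 2 = 1 := by
      have : ∑ y, q y ^ 2 = ∑ _y : Fin d, q x ^ 2 :=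
        Finset.sum_congr rfl fun y _ => by rw [hqc y x]
      rw [this, Finset.sum_const, Finset.card_univ, Fintype.card_fin, nsmul_eq_mul] at hsumq
      exact hsumq
    have hq2 : q x ^ 2 = 1 / d := by field_simp at hsq ⊢; linarith
    have hqnn : 0 ≤ q x := norm_nonneg _
    rw [← Real.sqrt_sq hqnn, hq2, one_div, Real.sqrt_inv, one_div]
  -- pointwise equality of norms
  have hpt : ∀ x y : Fin d, x ≠ y → ‖ρ x y‖ = q x * q y := by
    have houter := sum_eq_of_le
      (f := fun x => ∑ y, if x ≠ y then ‖ρ x y‖ else 0)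
      (g := fun x => ∑ y, (if x ≠ y then q x * q y else 0))
      (fun x => Finset.sum_le_sum fun y _ => by
        by_cases h : x = y
        · simp [h]
        · simp only [ne_eq, h, not_false_eq_true, if_true]
          exact habs x y) hSeq
    intro x y hxy
    have hin := sum_eq_of_le
      (f := fun y => if x ≠ y then ‖ρ x y‖ else 0)
      (g := fun y => (if x ≠ y then q x * q y else 0))
      (fun y => by
        by_cases h : x = y
        · simp [h]
        · simp only [ne_eq, h, not_false_eq_true, if_true]
          exact habs x y) (houter x) y
    simpa [hxy] using hin
  -- construct ψ
  have hqpos : ∀ x, 0 < q x := by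
    intro x
    rw [hq x]
    positivity
  have hbne : ∀ x, b x ≠ 0 := by
    intro x hx
    have := hqpos x
    rw [hqdef] at this
    simp only [hx, norm_zero] at this
    exact lt_irrefl _ this
  set x0 : Fin d := ⟨0, hd⟩ with hx0
  have hc : ∀ x, ∃ r : ℂ, b x = r • b x0 := by
    intro x
    by_cases hxx0 : x = x0
    · exact ⟨1, by rw [hxx0, one_smul]⟩
    · have hnn : ‖⟪b x0, b x⟫_ℂ‖ = ‖b x0‖ * ‖b x‖ := by
        rw [← hb, hpt x0 x (Ne.symm hxx0)]
      obtain ⟨r, _, hr⟩ := (norm_inner_eq_norm_iff (hbne x0) (hbne x)).mp hnn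
      exact ⟨r, hr⟩
  choose c hcc using hc
  refine ⟨fun x => (starRingEnd ℂ) (c x) * ((q x0 : ℝ) : ℂ), fun x => ?_, ?_⟩
  · rw [norm_mul, RCLike.norm_conj, Complex.norm_real,
      Real.norm_of_nonneg (norm_nonneg _)]
    have h1 : ‖c x‖ * q x0 = q x := by
      rw [hqdef]
      simp only []
      rw [← norm_smul, ← hcc x]
    rw [h1, hq]
  · ext x y
    rw [Matrix.of_apply, hb, hcc x, hcc y, inner_smul_left, inner_smul_right,
      inner_self_eq_norm_sq_to_K]
    simp only [Complex.star_def, map_mul, Complex.conj_conj, Complex.conj_ofReal, hqdef]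
    ring_nf
    rfl

end

open scoped Matrix ComplexOrder

/-- For any density matrix `ρ` on `ℂ^d`, the robustness of coherence `R` (in SDP form)
satisfies `R(ρ) ≤ C_{ℓ1}(ρ) = Σ_{x≠y}|ρ_{xy}|`, and the maximal possible value `d − 1`
is attained exactly when `ρ` is a maximally coherent pure state, i.e.
`ρ = |ψ⟩⟨ψ|` with `|⟨x|ψ⟩| = 1/√d` for all `x`. -/
theorem robustness_le_l1_and_max {d : ℕ} (hd : 0 < d)
    (ρ : Matrix (Fin d) (Fin d) ℂ) (hρ : ρ.PosSemidef) (hρtr : ρ.trace = 1)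
    (R : ℝ)
    (hR : IsGreatest {s : ℝ | ∃ X : Matrix (Fin d) (Fin d) ℂ,
        X.PosSemidef ∧ (∀ x, X x x = 1) ∧ (s : ℂ) = (ρ * X).trace - 1} R) :
    (R ≤ ∑ x, ∑ y, if x ≠ y then ‖ρ x y‖ else 0) ∧
    (R = d - 1 ↔ ∃ ψ : Fin d → ℂ, (∀ x, ‖ψ x‖ = 1 / Real.sqrt d) ∧
        ρ = Matrix.of fun x y => ψ x * star (ψ y)) := by
  have part1 : R ≤ ∑ x, ∑ y, if x ≠ y then ‖ρ x y‖ else 0 :=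
    feasible_le ρ hρtr hR.1
  refine ⟨part1, ?_, ?_⟩
  · intro hRd
    exact max_structure hd ρ hρ hρtr (by rw [← hRd]; exact part1)
  · rintro ⟨ψ, hψ, rfl⟩
    have hmem : ((d : ℝ) - 1) ∈ {s : ℝ | ∃ X : Matrix (Fin d) (Fin d) ℂ,
        X.PosSemidef ∧ (∀ x, X x x = 1) ∧
        (s : ℂ) = ((Matrix.of fun x y => ψ x * star (ψ y)) * X).trace - 1} :=
      max_mem hd ψ hψ
    have h1 : (d : ℝ) - 1 ≤ R := hR.2 hmem
    have h2 : R ≤ (d : ℝ) - 1 := by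
      calc R ≤ _ := part1
      _ = (d : ℝ) - 1 := l1_of_max hd ψ hψ
    linarith
end

section
/- For the pseudopure state ρ_s = p |ψ_max⟩⟨ψ_max| + (1−p) I/d, where |ψ_max⟩ = (1/√d) Σ_x e^{iθ_x}|x⟩ is a maximally coherent state and 0 ≤ p ≤ 1, the robustness of coherence equals the ℓ1-norm of coherence: R(ρ_s) = C_{ℓ1}(ρ_s) = p(d−1). -/
open scoped Matrix ComplexOrder

lemma psd_entry_le_one {d : ℕ} {X : Matrix (Fin d) (Fin d) ℂ} (hX : X.PosSemidef)
    (hdiag : ∀ x, X x x = 1) (i j : Fin d) : ‖X i j‖ ≤ 1 := by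
  obtain ⟨B, rfl⟩ : ∃ B : Matrix (Fin d) (Fin d) ℂ, X = Bᴴ * B := by
    classical
    open scoped MatrixOrder in
    obtain ⟨B, hB⟩ := CStarAlgebra.nonneg_iff_eq_star_mul_self.mp hX.nonneg
    exact ⟨B, hB⟩
  set f : EuclideanSpace ℂ (Fin d) := WithLp.toLp 2 (fun k => B k i) with hfdef
  set g : EuclideanSpace ℂ (Fin d) := WithLp.toLp 2 (fun k => B k j) with hgdef
  have hfg : (Bᴴ * B) i j = inner ℂ f g := by
    simp [Matrix.mul_apply, PiLp.inner_apply, Matrix.conjTranspose_apply, hfdef, hgdef,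
      RCLike.inner_apply, mul_comm]
  have key : ∀ k : Fin d, ∀ h : EuclideanSpace ℂ (Fin d), h = WithLp.toLp 2 (fun m => B m k) →
      ‖h‖ = 1 := by
    intro k h hh
    have h1 : (inner ℂ h h : ℂ) = 1 := by
      rw [← hdiag k, hh, PiLp.inner_apply]
      simp [Matrix.mul_apply, PiLp.inner_apply, Matrix.conjTranspose_apply, hh,
        RCLike.inner_apply, mul_comm, Complex.mul_conj']
    have h0 := inner_self_eq_norm_sq_to_K (𝕜 := ℂ) h
    rw [h1] at h0
    have h2 : (‖h‖:ℝ) ^ 2 = 1 := by exact_mod_cast congrArg Complex.re h0.symm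
    nlinarith [norm_nonneg h]
  calc ‖(Bᴴ * B) i j‖ = ‖(inner ℂ f g : ℂ)‖ := by rw [hfg]
    _ ≤ ‖f‖ * ‖g‖ := norm_inner_le_norm f g
    _ = 1 := by rw [key i f rfl, key j g rfl, one_mul]

/-- For the pseudopure state `ρ_s = p |ψ_max⟩⟨ψ_max| + (1−p) I/d` built from a maximally
coherent state `|ψ_max⟩ = (1/√d) Σ_x e^{iθ_x}|x⟩` and `0 ≤ p ≤ 1`, the robustness of
coherence (in SDP form) equals the `ℓ1`-norm of coherence: both are `p(d−1)`. -/
theorem robustness_pseudopure {d : ℕ} (hd : 0 < d) (p : ℝ) (hp0 : 0 ≤ p) (hp1 : p ≤ 1)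
    (θ : Fin d → ℝ) :
    let ψ : Fin d → ℂ := fun x => Complex.exp ((θ x : ℂ) * Complex.I) / (Real.sqrt d : ℂ)
    let ρs : Matrix (Fin d) (Fin d) ℂ :=
      (p : ℂ) • Matrix.of (fun x y => ψ x * star (ψ y)) +
        ((1 - p : ℝ) : ℂ) • ((d : ℂ)⁻¹ • (1 : Matrix (Fin d) (Fin d) ℂ))
    IsGreatest {s : ℝ | ∃ X : Matrix (Fin d) (Fin d) ℂ,
        X.PosSemidef ∧ (∀ x, X x x = 1) ∧ (s : ℂ) = (ρs * X).trace - 1}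
      (p * (d - 1)) ∧
    (∑ x, ∑ y, if x ≠ y then ‖ρs x y‖ else 0) = p * (d - 1) := by
  intro ψ ρs
  have hd' : (0:ℝ) < d := by exact_mod_cast hd
  have hdc : (d:ℂ) ≠ 0 := by exact_mod_cast hd'.ne'
  set v : Fin d → ℂ := fun x => Complex.exp ((θ x : ℂ) * Complex.I) with hv
  have hvv : ∀ x y : Fin d, v x * star (v y) = Complex.exp (((θ x : ℝ) - θ y : ℝ) * Complex.I) := by
    intro x y
    have hst : star (v y) = Complex.exp (-((θ y : ℂ) * Complex.I)) := by
      rw [hv]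
      show star (Complex.exp _) = _
      rw [Complex.star_def, ← Complex.exp_conj, map_mul, Complex.conj_I, Complex.conj_ofReal]
      ring_nf
    rw [hst, hv, ← Complex.exp_add]
    push_cast
    ring_nf
  have hnv : ∀ x, ‖v x‖ = 1 := fun x => Complex.norm_exp_ofReal_mul_I _
  have hvv1 : ∀ x, v x * star (v x) = 1 := by
    intro x; rw [hvv]; simp
  have hψv : ∀ x y : Fin d, ψ x * star (ψ y) = v x * star (v y) / d := by
    intro x y
    show v x / (Real.sqrt d : ℂ) * star (v y / (Real.sqrt d : ℂ)) = _
    have h1 : star ((Real.sqrt d : ℂ)) = (Real.sqrt d : ℂ) := by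
      simp [Complex.star_def, Complex.conj_ofReal]
    have h2 : ((Real.sqrt d : ℂ)) * ((Real.sqrt d : ℂ)) = (d : ℂ) := by
      rw [← Complex.ofReal_mul, Real.mul_self_sqrt hd'.le]
      norm_cast
    rw [star_div₀, h1, div_mul_div_comm, h2]
  have hρ : ∀ x y : Fin d, ρs x y =
      (p:ℂ) * (v x * star (v y)) / d + (if x = y then ((1-p:ℝ):ℂ)/d else 0) := by
    intro x y
    show (p:ℂ) • Matrix.of (fun x y => ψ x * star (ψ y)) x y
        + (((1-p:ℝ):ℂ) • ((d : ℂ)⁻¹ • (1 : Matrix (Fin d) (Fin d) ℂ))) x y = _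
    simp only [Matrix.smul_apply, Matrix.of_apply, Matrix.one_apply, smul_eq_mul,
      hψv, mul_ite, mul_one, mul_zero]
    split <;> field_simp <;> ring
  -- trace formula
  have htr : ∀ X : Matrix (Fin d) (Fin d) ℂ, (∀ x, X x x = 1) →
      (ρs * X).trace = (p:ℂ)/d * (∑ x, ∑ y, v x * star (v y) * X y x) + ((1-p:ℝ):ℂ) := by
    intro X hdg
    rw [Matrix.trace]
    simp only [Matrix.diag_apply, Matrix.mul_apply, hρ]
    have inner_eq : ∀ x : Fin d, ∑ y, ((p:ℂ) * (v x * star (v y)) / d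
          + (if x = y then ((1-p:ℝ):ℂ)/d else 0)) * X y x
        = (p:ℂ)/d * (∑ y, v x * star (v y) * X y x) + ((1-p:ℝ):ℂ)/d := by
      intro x
      have e : ∀ y : Fin d, ((p:ℂ) * (v x * star (v y)) / d
            + (if x = y then ((1-p:ℝ):ℂ)/d else 0)) * X y x
          = (p:ℂ)/d * (v x * star (v y) * X y x)
            + (if x = y then ((1-p:ℝ):ℂ)/d * X y x else 0) := by
        intro y; split <;> ring
      rw [Finset.sum_congr rfl fun y _ => e y, Finset.sum_add_distrib, ← Finset.mul_sum,
        Finset.sum_ite_eq]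
      simp [hdg x]
    rw [Finset.sum_congr rfl fun x _ => inner_eq x, Finset.sum_add_distrib, ← Finset.mul_sum,
      Finset.sum_const, Finset.card_univ, Fintype.card_fin, nsmul_eq_mul]
    congr 1
    field_simp
  constructor
  · constructor
    · -- membership: witness X₀
      refine ⟨Matrix.of (fun x y => v x * star (v y)), ?_, ?_, ?_⟩
      · refine Matrix.PosSemidef.of_dotProduct_mulVec_nonneg ?_ ?_
        · ext x y
          simp only [Matrix.conjTranspose_apply, Matrix.of_apply, star_mul, star_star]
        · intro a
          have key : (star a) ⬝ᵥ ((Matrix.of fun x y => v x * star (v y)) *ᵥ a)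
              = star (∑ j, star (v j) * a j) * (∑ j, star (v j) * a j) := by
            rw [star_sum]
            simp only [star_mul, star_star]
            rw [Finset.sum_mul_sum]
            simp only [dotProduct, Matrix.mulVec, Matrix.of_apply]
            rw [Finset.sum_congr rfl fun i _ => Finset.mul_sum _ _ _]
            refine Finset.sum_congr rfl fun i _ => Finset.sum_congr rfl fun j _ => ?_
            simp only [Pi.star_apply]
            ring
          rw [key]
          exact star_mul_self_nonneg _
      · intro x
        exact hvv1 x
      · rw [htr _ (fun x => hvv1 x)]
        have hSS : (∑ x : Fin d, ∑ y : Fin d,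
            v x * star (v y) * (Matrix.of (fun x y => v x * star (v y)) y x)) = (d:ℂ)^2 := by
          have : ∀ x y : Fin d,
              v x * star (v y) * (Matrix.of (fun x y => v x * star (v y)) y x) = 1 := by
            intro x y
            simp only [Matrix.of_apply]
            calc v x * star (v y) * (v y * star (v x))
                = (v x * star (v x)) * (v y * star (v y)) := by ring
              _ = 1 := by rw [hvv1, hvv1, one_mul]
          calc (∑ x : Fin d, ∑ y : Fin d,
              v x * star (v y) * (Matrix.of (fun x y => v x * star (v y)) y x))
              = ∑ _x : Fin d, ∑ _y : Fin d, (1:ℂ) :=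
                Finset.sum_congr rfl fun x _ => Finset.sum_congr rfl fun y _ => this x y
            _ = (d:ℂ)^2 := by simp [sq]
        rw [hSS]
        push_cast
        field_simp
        ring
    · -- upper bound
      rintro s ⟨X, hX, hdg, hs⟩
      rw [htr X hdg] at hs
      set S := ∑ x : Fin d, ∑ y : Fin d, v x * star (v y) * X y x with hSdef
      have hSnorm : ‖S‖ ≤ (d:ℝ)^2 := by
        calc ‖S‖ ≤ ∑ x : Fin d, ‖∑ y : Fin d, v x * star (v y) * X y x‖ := norm_sum_le _ _
          _ ≤ ∑ x : Fin d, ∑ y : Fin d, ‖v x * star (v y) * X y x‖ :=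
              Finset.sum_le_sum fun x _ => norm_sum_le _ _
          _ ≤ ∑ _x : Fin d, ∑ _y : Fin d, (1:ℝ) := by
              refine Finset.sum_le_sum fun x _ => Finset.sum_le_sum fun y _ => ?_
              rw [norm_mul, norm_mul, norm_star, hnv, hnv, one_mul, one_mul]
              exact psd_entry_le_one hX hdg y x
          _ = (d:ℝ)^2 := by simp [sq]
      have hcast : ((p/d : ℝ) : ℂ) = (p:ℂ)/d := by push_cast; ring
      rw [← hcast] at hs
      have hre : s = (p/d) * S.re + (1-p) - 1 := by
        have := congrArg Complex.re hs
        simpa [Complex.re_ofReal_mul] using this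
      have hre2 : S.re ≤ (d:ℝ)^2 :=
        le_trans (Complex.re_le_norm S) hSnorm
      have hpd : (0:ℝ) ≤ p/d := div_nonneg hp0 hd'.le
      have h1 : (p/d) * S.re ≤ (p/d) * (d:ℝ)^2 := mul_le_mul_of_nonneg_left hre2 hpd
      have h2 : (p/d) * (d:ℝ)^2 = p * d := by field_simp
      rw [hre]
      nlinarith
  · -- ℓ1 norm
    have e : ∀ x y : Fin d, (if x ≠ y then ‖ρs x y‖ else 0)
        = (p/d) - (if x = y then p/d else 0) := by
      intro x y
      by_cases h : x = y
      · simp [h]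
      · rw [if_pos h, if_neg h, sub_zero, hρ, if_neg h, add_zero]
        rw [norm_div, norm_mul, norm_mul, norm_star, hnv, hnv, mul_one, mul_one]
        rw [Complex.norm_real, Real.norm_eq_abs, abs_of_nonneg hp0]
        congr 1
        simp [Complex.norm_natCast]
    rw [Finset.sum_congr rfl fun x _ => Finset.sum_congr rfl fun y _ => e x y]
    have inner2 : ∀ x : Fin d, ∑ y : Fin d, ((p/d) - (if x = y then p/d else 0))
        = (d:ℝ) * (p/d) - p/d := by
      intro x
      rw [Finset.sum_sub_distrib, Finset.sum_const, Finset.card_univ, Fintype.card_fin,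
        nsmul_eq_mul, Finset.sum_ite_eq]
      simp
    rw [Finset.sum_congr rfl fun x _ => inner2 x, Finset.sum_const, Finset.card_univ,
      Fintype.card_fin, nsmul_eq_mul]
    field_simp
end

section
/- Among all d×d density matrices ρ with purity Tr(ρ²) ≤ γ (where 1/d ≤ γ ≤ 1), the maximum of Σ_{x≠y}|ρ_{xy}| equals (d−1)·√((γ − 1/d)/(1 − 1/d)), attained by the pseudopure state ρ = p|ψ_max⟩⟨ψ_max| + (1−p)I/d with p = √((γ−1/d)/(1−1/d)) and |ψ_max⟩ a maximally coherent state. -/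
open scoped Matrix ComplexOrder
open Finset Matrix

private lemma psd_real_smul {n : Type*} [Fintype n] {M : Matrix n n ℂ} (hM : M.PosSemidef)
    {c : ℝ} (hc : 0 ≤ c) : ((c : ℂ) • M).PosSemidef := by
  constructor
  · have := hM.1
    unfold Matrix.IsHermitian at *
    rw [conjTranspose_smul, this]
    congr 1
    simp [Complex.star_def, Complex.conj_ofReal]
  · intro x
    exact (hM.smul (Complex.zero_le_real.2 hc)).2 x

private lemma psd_J {d : ℕ} : (Matrix.of fun _ _ : Fin d => (1:ℂ)).PosSemidef := by
  have h := Matrix.posSemidef_conjTranspose_mul_self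
    (Matrix.of fun (_ : Fin 1) (_ : Fin d) => (1:ℂ))
  convert h using 2
  ext x y
  simp [Matrix.mul_apply, Matrix.conjTranspose_apply]

private lemma offdiag_sum {d : ℕ} (f : Fin d → Fin d → ℝ) :
    (∑ x, ∑ y, if x ≠ y then f x y else 0)
    = ∑ p ∈ univ.filter (fun p : Fin d × Fin d => p.1 ≠ p.2), f p.1 p.2 := by
  rw [Finset.sum_filter, ← Finset.univ_product_univ, Finset.sum_product]

private lemma split_sum {d : ℕ} (f : Fin d → Fin d → ℝ) :
    (∑ x, ∑ y, f x y)
    = (∑ p ∈ univ.filter (fun p : Fin d × Fin d => p.1 ≠ p.2), f p.1 p.2)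
      + ∑ x, f x x := by
  classical
  have e : (∑ x, ∑ y, f x y) = ∑ p ∈ (univ ×ˢ univ : Finset (Fin d × Fin d)), f p.1 p.2 :=
    (Finset.sum_product univ univ (fun p => f p.1 p.2)).symm
  rw [e, ← Finset.sum_filter_add_sum_filter_not (univ ×ˢ univ)
    (fun p : Fin d × Fin d => p.1 ≠ p.2) (fun p => f p.1 p.2)]
  congr 1
  on_goal 1 => rw [Finset.univ_product_univ]
  have h1 : (univ : Finset (Fin d × Fin d)).filter (fun p => ¬ p.1 ≠ p.2)
      = univ.image (fun x : Fin d => (x, x)) := by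
    ext ⟨a, b⟩
    simp [eq_comm (a := a), Prod.ext_iff]
  rw [h1, Finset.sum_image (fun a _ b _ h => by simpa using congrArg Prod.fst h)]

private lemma card_offdiag {d : ℕ} (hd : 0 < d) :
    (((univ : Finset (Fin d × Fin d)).filter fun p => p.1 ≠ p.2).card : ℝ)
      = d * (d - 1) := by
  classical
  have h1 : ((univ : Finset (Fin d × Fin d)).filter fun p => p.1 = p.2)
      = univ.image (fun x : Fin d => (x, x)) := by
    ext ⟨a, b⟩
    simp [eq_comm (a := a), Prod.ext_iff]
  have h2 : ((univ : Finset (Fin d × Fin d)).filter fun p => p.1 = p.2).card = d := by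
    rw [h1, Finset.card_image_of_injective _ (fun a b h => by
      simpa using congrArg Prod.fst h)]
    simp
  have h3 := Finset.card_filter_add_card_filter_not
    (s := (univ : Finset (Fin d × Fin d))) (p := fun p => p.1 = p.2)
  rw [h2, Finset.card_univ, Fintype.card_prod, Fintype.card_fin] at h3
  have h4 : ((univ : Finset (Fin d × Fin d)).filter fun p => p.1 ≠ p.2).card
      = d * d - d := by
    simp only [ne_eq]; omega
  rw [h4, Nat.cast_sub (Nat.le_mul_of_pos_left d hd)]
  push_cast; ring

private lemma ub {d : ℕ} (hd : 0 < d) {γ : ℝ} (hγ1 : 1 / d ≤ γ) {ρ : Matrix (Fin d) (Fin d) ℂ}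
    (htr : ρ.trace = 1) (hpur : (∑ x, ∑ y, ‖ρ x y‖ ^ 2) ≤ γ) :
    (∑ x, ∑ y, if x ≠ y then ‖ρ x y‖ else 0)
      ≤ Real.sqrt ((d * (d - 1)) * (γ - 1 / d)) := by
  classical
  set S := (univ : Finset (Fin d × Fin d)).filter (fun p => p.1 ≠ p.2) with hS
  have hdpos : (0:ℝ) < d := by exact_mod_cast hd
  have htr' : ∑ i, (ρ i i).re = 1 := by
    have : (ρ.trace).re = 1 := by rw [htr]; simp
    rw [Matrix.trace] at this
    simpa [Matrix.diag, Complex.re_sum] using this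
  have hcs1 : (1:ℝ) ≤ d * ∑ i, (ρ i i).re ^ 2 := by
    have := sq_sum_le_card_mul_sum_sq (s := (univ : Finset (Fin d)))
      (f := fun i => (ρ i i).re)
    simpa [htr'] using this
  have hre : ∀ i : Fin d, (ρ i i).re ^ 2 ≤ ‖ρ i i‖ ^ 2 := by
    intro i
    have h1 : |(ρ i i).re| ≤ ‖ρ i i‖ := Complex.abs_re_le_norm _
    calc (ρ i i).re ^ 2 = |(ρ i i).re| ^ 2 := (sq_abs _).symm
      _ ≤ ‖ρ i i‖ ^ 2 := by gcongr
  have hdiag : 1 / (d:ℝ) ≤ ∑ i, ‖ρ i i‖ ^ 2 := by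
    rw [div_le_iff₀ hdpos]
    calc (1:ℝ) ≤ d * ∑ i, (ρ i i).re ^ 2 := hcs1
      _ ≤ d * ∑ i, ‖ρ i i‖ ^ 2 :=
          mul_le_mul_of_nonneg_left (Finset.sum_le_sum fun i _ => hre i) hdpos.le
      _ = (∑ i, ‖ρ i i‖ ^ 2) * d := by ring
  have hsplit := split_sum (fun x y => ‖ρ x y‖ ^ 2)
  have hoff : ∑ p ∈ S, ‖ρ p.1 p.2‖ ^ 2 ≤ γ - 1 / d := by
    rw [hsplit] at hpur; rw [hS]; linarith
  have hγd : (0:ℝ) ≤ γ - 1 / d := by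
    have h0 : (0:ℝ) ≤ ∑ p ∈ S, ‖ρ p.1 p.2‖ ^ 2 :=
      Finset.sum_nonneg fun p _ => by positivity
    linarith
  have hcs2 : (∑ p ∈ S, ‖ρ p.1 p.2‖) ^ 2 ≤ (S.card : ℝ) * ∑ p ∈ S, ‖ρ p.1 p.2‖ ^ 2 :=
    sq_sum_le_card_mul_sum_sq
  have hcard : ((S.card : ℝ)) = d * (d - 1) := card_offdiag hd
  rw [offdiag_sum, ← hS]
  have hnn : (0:ℝ) ≤ ∑ p ∈ S, ‖ρ p.1 p.2‖ := Finset.sum_nonneg fun p _ => norm_nonneg _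
  have hd1 : (1:ℝ) ≤ d := by exact_mod_cast hd
  have hnn2 : (0:ℝ) ≤ ((d:ℝ) * ((d:ℝ) - 1)) * (γ - 1/d) :=
    mul_nonneg (mul_nonneg hdpos.le (by linarith)) hγd
  apply (Real.le_sqrt hnn hnn2).2
  calc (∑ p ∈ S, ‖ρ p.1 p.2‖) ^ 2 ≤ (S.card : ℝ) * ∑ p ∈ S, ‖ρ p.1 p.2‖ ^ 2 := hcs2
    _ ≤ (S.card : ℝ) * (γ - 1 / d) := by gcongr
    _ = (d * (d - 1)) * (γ - 1 / d) := by rw [hcard]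

private lemma key1 {d : ℕ} (hd : 0 < d) {γ : ℝ} (hγ1 : 1 / d ≤ γ) (hγ2 : γ ≤ 1) :
    ((d:ℝ) - 1) * Real.sqrt ((γ - 1 / d) / (1 - 1 / d))
      = Real.sqrt ((d * (d - 1)) * (γ - 1 / d)) := by
  rcases eq_or_ne d 1 with rfl | hne
  · norm_num
  have hd2 : (2:ℝ) ≤ d := by exact_mod_cast (by omega : 2 ≤ d)
  have hdpos : (0:ℝ) < d := by linarith
  have hden : (0:ℝ) < 1 - 1 / d := by
    rw [sub_pos, div_lt_one hdpos]; linarith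
  have hdm1 : (0:ℝ) < (d:ℝ) - 1 := by linarith
  rw [show ((d:ℝ) - 1) = Real.sqrt (((d:ℝ) - 1) ^ 2) by
    rw [Real.sqrt_sq hdm1.le], ← Real.sqrt_mul (by positivity)]
  congr 1
  rw [Real.sqrt_sq hdm1.le]
  field_simp

/-- Among all `d×d` density matrices `ρ` with purity `Tr(ρ²) = Σ_{x,y}|ρ_{xy}|² ≤ γ`
(where `1/d ≤ γ ≤ 1`), the maximum of `C_{ℓ1}(ρ) = Σ_{x≠y}|ρ_{xy}|` equals
`(d−1)·√((γ − 1/d)/(1 − 1/d))`, attained by the pseudopure state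
`p|ψ_max⟩⟨ψ_max| + (1−p)I/d` with `p = √((γ−1/d)/(1−1/d))` and `|ψ_max⟩` maximally
coherent. -/
theorem max_l1_coherence_bounded_purity {d : ℕ} (hd : 0 < d) (γ : ℝ)
    (hγ1 : 1 / d ≤ γ) (hγ2 : γ ≤ 1) :
    IsGreatest {s : ℝ | ∃ ρ : Matrix (Fin d) (Fin d) ℂ,
        ρ.PosSemidef ∧ ρ.trace = 1 ∧ (∑ x, ∑ y, ‖ρ x y‖ ^ 2) ≤ γ ∧
        s = ∑ x, ∑ y, if x ≠ y then ‖ρ x y‖ else 0}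
      ((d - 1) * Real.sqrt ((γ - 1 / d) / (1 - 1 / d))) ∧
    (∀ ψ : Fin d → ℂ, (∀ x, ‖ψ x‖ = 1 / Real.sqrt d) →
      let p : ℝ := Real.sqrt ((γ - 1 / d) / (1 - 1 / d))
      let ρp : Matrix (Fin d) (Fin d) ℂ :=
        (p : ℂ) • Matrix.of (fun x y => ψ x * star (ψ y)) +
          ((1 - p : ℝ) : ℂ) • ((d : ℂ)⁻¹ • (1 : Matrix (Fin d) (Fin d) ℂ))
      (∑ x, ∑ y, if x ≠ y then ‖ρp x y‖ else 0)
        = (d - 1) * Real.sqrt ((γ - 1 / d) / (1 - 1 / d))) := by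
  classical
  have hdpos : (0:ℝ) < d := by exact_mod_cast hd
  have hd1 : (1:ℝ) ≤ d := by exact_mod_cast hd
  set p : ℝ := Real.sqrt ((γ - 1 / d) / (1 - 1 / d)) with hp
  have hγd : (0:ℝ) ≤ γ - 1 / d := by linarith
  have hdenn : (0:ℝ) ≤ 1 - 1 / d := by
    rw [sub_nonneg, div_le_one hdpos]; linarith
  have hX0 : (0:ℝ) ≤ (γ - 1 / d) / (1 - 1 / d) := div_nonneg hγd hdenn
  have hp0 : 0 ≤ p := Real.sqrt_nonneg _
  have hp2 : p ^ 2 = (γ - 1 / d) / (1 - 1 / d) := Real.sq_sqrt hX0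
  have hp1 : p ≤ 1 := by
    rcases eq_or_ne d 1 with rfl | hne
    · have : γ = 1 := le_antisymm hγ2 (by simpa using hγ1)
      simp [hp, this]
    · have hd2 : (2:ℝ) ≤ d := by exact_mod_cast (by omega : 2 ≤ d)
      have hden : (0:ℝ) < 1 - 1 / d := by
        rw [sub_pos, div_lt_one hdpos]; linarith
      rw [hp]
      exact Real.sqrt_le_one.2 (by rw [div_le_one hden]; linarith)
  have hkey2 : ((d:ℝ) - 1) / d * p ^ 2 = γ - 1 / d := by
    rcases eq_or_ne d 1 with rfl | hne
    · have : γ = 1 := le_antisymm hγ2 (by simpa using hγ1)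
      simp [this]
    · have hd2 : (2:ℝ) ≤ d := by exact_mod_cast (by omega : 2 ≤ d)
      have hden : (0:ℝ) < 1 - 1 / d := by
        rw [sub_pos, div_lt_one hdpos]; linarith
      rw [hp2, show ((d:ℝ) - 1) / d = 1 - 1 / d by field_simp]
      rw [mul_comm, div_mul_cancel₀ _ hden.ne']
  -- the witness matrix
  set ρ₀ : Matrix (Fin d) (Fin d) ℂ :=
    ((p / d : ℝ) : ℂ) • (Matrix.of fun _ _ : Fin d => (1:ℂ)) +
      (((1 - p) / d : ℝ) : ℂ) • (1 : Matrix (Fin d) (Fin d) ℂ) with hρ₀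
  have hρval : ∀ x y : Fin d, ρ₀ x y
      = ((p / d : ℝ) : ℂ) + (((1 - p) / d : ℝ) : ℂ) * (if x = y then 1 else 0) := by
    intro x y
    simp [hρ₀, Matrix.add_apply, Matrix.smul_apply, Matrix.one_apply, smul_eq_mul,
      mul_ite, mul_one, mul_zero]
  have hρoff : ∀ x y : Fin d, x ≠ y → ‖ρ₀ x y‖ = p / d := by
    intro x y hxy
    rw [hρval x y, if_neg hxy, mul_zero, add_zero, Complex.norm_real,
      Real.norm_eq_abs]
    exact abs_of_nonneg (by positivity)
  have hρdiag : ∀ x : Fin d, ρ₀ x x = ((1 / d : ℝ) : ℂ) := by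
    intro x
    rw [hρval x x, if_pos rfl, mul_one, ← Complex.ofReal_add]
    congr 1
    field_simp
    ring
  have hcardS : (((univ : Finset (Fin d × Fin d)).filter fun p => p.1 ≠ p.2).card : ℝ)
      = d * (d - 1) := card_offdiag hd
  have hl1 : (∑ x, ∑ y, if x ≠ y then ‖ρ₀ x y‖ else 0) = ((d:ℝ) - 1) * p := by
    rw [offdiag_sum]
    rw [Finset.sum_congr rfl (fun (q : Fin d × Fin d) hq => hρoff q.1 q.2 (by simpa using (Finset.mem_filter.1 hq).2))]
    rw [Finset.sum_const, nsmul_eq_mul, hcardS]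
    field_simp
  constructor
  · constructor
    · -- membership
      refine ⟨ρ₀, ?_, ?_, ?_, ?_⟩
      · exact (psd_real_smul psd_J (by positivity)).add
          (psd_real_smul Matrix.PosSemidef.one (div_nonneg (by linarith) hdpos.le))
      · rw [Matrix.trace]
        simp only [Matrix.diag]
        rw [Finset.sum_congr rfl (fun x _ => hρdiag x)]
        rw [Finset.sum_const, nsmul_eq_mul, Finset.card_univ, Fintype.card_fin]
        have hdC : (d:ℂ) ≠ 0 := by exact_mod_cast (Nat.cast_ne_zero (R := ℂ)).2 hd.ne'
        push_cast
        field_simp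
      · -- purity
        rw [split_sum]
        have e1 : (∑ q ∈ (univ : Finset (Fin d × Fin d)).filter (fun q => q.1 ≠ q.2),
            ‖ρ₀ q.1 q.2‖ ^ 2) = (d * (d - 1)) * (p / d) ^ 2 := by
          have hv : ∀ q : Fin d × Fin d, q.1 ≠ q.2 → ‖ρ₀ q.1 q.2‖ ^ 2 = (p / d) ^ 2 :=
            fun q hq => by rw [hρoff q.1 q.2 hq]
          rw [Finset.sum_congr rfl (fun (q : Fin d × Fin d) hq =>
            hv q (by simpa using (Finset.mem_filter.1 hq).2))]
          rw [Finset.sum_const, nsmul_eq_mul, hcardS]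
        have e2 : (∑ x : Fin d, ‖ρ₀ x x‖ ^ 2) = (d:ℝ) * (1 / d) ^ 2 := by
          have hv : ∀ x : Fin d, ‖ρ₀ x x‖ ^ 2 = (1 / (d:ℝ)) ^ 2 := fun x => by
            rw [hρdiag x, Complex.norm_real, Real.norm_eq_abs,
              abs_of_nonneg (by positivity)]
          rw [Finset.sum_congr rfl (fun x _ => hv x)]
          rw [Finset.sum_const, nsmul_eq_mul, Finset.card_univ, Fintype.card_fin]
        rw [e1, e2]
        have : (d:ℝ) * ((d:ℝ) - 1) * (p / d) ^ 2 = ((d:ℝ) - 1) / d * p ^ 2 := by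
          field_simp
        rw [this, hkey2]
        have : (d:ℝ) * (1 / d) ^ 2 = 1 / d := by field_simp
        rw [this]
        linarith
      · exact hl1.symm
    · -- upper bound
      rintro s ⟨ρ, hpsd, htr, hpur, rfl⟩
      rw [key1 hd hγ1 hγ2]
      exact ub hd hγ1 htr hpur
  · -- part 2
    intro ψ hψ
    intro p' ρp
    have hpp : p' = p := rfl
    have hmul : ∀ x y : Fin d, ‖ψ x * star (ψ y)‖ = 1 / d := by
      intro x y
      rw [norm_mul, norm_star, hψ x, hψ y]
      rw [div_mul_div_comm, one_mul, Real.mul_self_sqrt hdpos.le]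
    have hρpoff : ∀ x y : Fin d, x ≠ y → ‖ρp x y‖ = p / d := by
      intro x y hxy
      show ‖((p' : ℂ) • Matrix.of (fun x y => ψ x * star (ψ y)) +
          ((1 - p' : ℝ) : ℂ) • ((d : ℂ)⁻¹ • (1 : Matrix (Fin d) (Fin d) ℂ))) x y‖ = p / d
      rw [Matrix.add_apply, Matrix.smul_apply, Matrix.smul_apply, Matrix.smul_apply,
        Matrix.one_apply_ne hxy]
      simp only [smul_eq_mul, mul_zero, add_zero, Matrix.of_apply]
      rw [norm_mul, hmul x y, hpp, Complex.norm_real, Real.norm_eq_abs,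
        abs_of_nonneg hp0]
      ring
    rw [offdiag_sum]
    rw [Finset.sum_congr rfl (fun (q : Fin d × Fin d) hq => hρpoff q.1 q.2 (by simpa using (Finset.mem_filter.1 hq).2))]
    rw [Finset.sum_const, nsmul_eq_mul, hcardS]
    field_simp
end

section
/- For N ≥ 3, no N-qubit state of the form |W⟩ = (1/√N) Σ_{j=1}^N e^{iφ_j} |ψ_1⟩⋯|ψ_j^⊥⟩⋯|ψ_N⟩, where {|ψ_i⟩, |ψ_i^⊥⟩} is an orthonormal basis of each qubit, is maximally coherent in the computational basis, i.e., its computational-basis coefficients cannot all have modulus 1/√(2^N). -/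
open Finset Complex

private lemma key_expand (N : ℕ) (w : Fin N → Fin N → Fin 2 → ℂ) (e : Fin N → ℂ)
    (σ : Fin N → Fin 2 → ℂ) :
    ∑ x : Fin N → Fin 2, (∏ i, σ i (x i)) *
      ((∑ j, e j * ∏ i, w j i (x i)) * (starRingEnd ℂ) (∑ j, e j * ∏ i, w j i (x i)))
    = ∑ j, ∑ j', (e j * (starRingEnd ℂ) (e j')) *
        ∏ i, ∑ b, σ i b * (w j i b * (starRingEnd ℂ) (w j' i b)) := by
  have h1 : ∀ x : Fin N → Fin 2,
      (∏ i, σ i (x i)) *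
        ((∑ j, e j * ∏ i, w j i (x i)) * (starRingEnd ℂ) (∑ j, e j * ∏ i, w j i (x i)))
      = ∑ j, ∑ j', (e j * (starRingEnd ℂ) (e j')) *
          ∏ i, (σ i (x i) * (w j i (x i) * (starRingEnd ℂ) (w j' i (x i)))) := by
    intro x
    rw [map_sum, Finset.sum_mul_sum, Finset.mul_sum]
    refine Finset.sum_congr rfl fun j _ => ?_
    rw [Finset.mul_sum]
    refine Finset.sum_congr rfl fun j' _ => ?_
    rw [map_mul, map_prod]
    simp only [Finset.prod_mul_distrib]
    ring
  simp only [h1]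
  rw [Finset.sum_comm]
  refine Finset.sum_congr rfl fun j _ => ?_
  rw [Finset.sum_comm]
  refine Finset.sum_congr rfl fun j' _ => ?_
  rw [← Finset.mul_sum]
  congr 1
  rw [Finset.prod_univ_sum (fun _ => (univ : Finset (Fin 2)))]
  rw [Fintype.piFinset_univ]

private lemma sum_ite_const (N : ℕ) (k : Fin N) (c d : ℂ) :
    ∑ j, (if k = j then c else d) = (c - d) + N * d := by
  have h : ∀ j : Fin N, (if k = j then c else d) = (if k = j then c - d else 0) + d := by
    intro j; by_cases h : k = j <;> simp [h]
  simp only [h, Finset.sum_add_distrib, Finset.sum_ite_eq, mem_univ, if_true, Finset.sum_const,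
    Finset.card_univ, Fintype.card_fin, nsmul_eq_mul]

private lemma re_zero_of_conj (z : ℂ) (h : z + (starRingEnd ℂ) z = 0) : z.re = 0 := by
  have h2 := Complex.add_conj z
  rw [h] at h2
  have h3 : (z.re : ℂ) = 0 := by push_cast at h2 ⊢; linear_combination -h2/2
  exact_mod_cast h3


private lemma no_three (W0 W1 W2 : ℂ) (h0 : W0 ≠ 0) (h1 : W1 ≠ 0) (h2 : W2 ≠ 0)
    (h01 : W1 * (starRingEnd ℂ) W0 + W0 * (starRingEnd ℂ) W1 = 0)
    (h02 : W2 * (starRingEnd ℂ) W0 + W0 * (starRingEnd ℂ) W2 = 0)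
    (h12 : W1 * (starRingEnd ℂ) W2 + W2 * (starRingEnd ℂ) W1 = 0) : False := by
  set a0 := W0.re; set b0 := W0.im
  set a1 := W1.re; set b1 := W1.im
  set a2 := W2.re; set b2 := W2.im
  have d01 : a1 * a0 + b1 * b0 = 0 := by
    have := congrArg Complex.re h01
    simp only [Complex.add_re, Complex.mul_re, Complex.conj_re, Complex.conj_im,
      Complex.zero_re] at this
    linarith
  have d02 : a2 * a0 + b2 * b0 = 0 := by
    have := congrArg Complex.re h02
    simp only [Complex.add_re, Complex.mul_re, Complex.conj_re, Complex.conj_im,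
      Complex.zero_re] at this
    linarith
  have d12 : a1 * a2 + b1 * b2 = 0 := by
    have := congrArg Complex.re h12
    simp only [Complex.add_re, Complex.mul_re, Complex.conj_re, Complex.conj_im,
      Complex.zero_re] at this
    linarith
  have hn0 : a0 ^ 2 + b0 ^ 2 > 0 := by
    rcases Complex.ext_iff.not.mp h0 with h
    push_neg at h
    by_cases ha : a0 = 0
    · have hb : b0 ≠ 0 := by
        intro hb; exact h0 (Complex.ext ha hb)
      positivity
    · positivity
  have key : (a1 * b0 - b1 * a0) * (a2 * b0 - b2 * a0) = 0 := by
    linear_combination (a0^2 + b0^2) * d12 - (a2 * a0 + b2 * b0) * d01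
  rcases mul_eq_zero.mp key with hc | hc
  · have ha1 : a1 * (a0^2 + b0^2) = 0 := by linear_combination a0 * d01 + b0 * hc
    have hb1 : b1 * (a0^2 + b0^2) = 0 := by linear_combination b0 * d01 - a0 * hc
    exact h1 (Complex.ext
      (by have := mul_eq_zero.mp ha1; rcases this with h | h; exact h; linarith)
      (by have := mul_eq_zero.mp hb1; rcases this with h | h; exact h; linarith))
  · have ha2 : a2 * (a0^2 + b0^2) = 0 := by linear_combination a0 * d02 + b0 * hc
    have hb2 : b2 * (a0^2 + b0^2) = 0 := by linear_combination b0 * d02 - a0 * hc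
    exact h2 (Complex.ext
      (by have := mul_eq_zero.mp ha2; rcases this with h | h; exact h; linarith)
      (by have := mul_eq_zero.mp hb2; rcases this with h | h; exact h; linarith))

private lemma w_aux (N : ℕ) (hN : 3 ≤ N) (ψ ψp : Fin N → Fin 2 → ℂ) (e : Fin N → ℂ) (C : ℂ)
    (hψ : ∀ i, ψ i 0 * (starRingEnd ℂ) (ψ i 0) + ψ i 1 * (starRingEnd ℂ) (ψ i 1) = 1)
    (hψp : ∀ i, ψp i 0 * (starRingEnd ℂ) (ψp i 0) + ψp i 1 * (starRingEnd ℂ) (ψp i 1) = 1)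
    (horth : ∀ i, (starRingEnd ℂ) (ψ i 0) * ψp i 0 + (starRingEnd ℂ) (ψ i 1) * ψp i 1 = 0)
    (he : ∀ j, e j * (starRingEnd ℂ) (e j) = 1) (hne : ∀ j, e j ≠ 0)
    (hS : ∀ x : Fin N → Fin 2,
      (∑ j, e j * ∏ i, (if i = j then ψp i (x i) else ψ i (x i))) *
        (starRingEnd ℂ) (∑ j, e j * ∏ i, (if i = j then ψp i (x i) else ψ i (x i))) = C) :
    False := by
  set K := starRingEnd ℂ with hK
  set w : Fin N → Fin N → Fin 2 → ℂ := fun j i b => if i = j then ψp i b else ψ i b with hw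
  set sg : Fin 2 → ℂ := fun b => if b = 0 then 1 else -1 with hsg
  have hsg0 : sg 0 = 1 := rfl
  have hsg1 : sg 1 = -1 := rfl
  set βu : Fin N → ℂ := fun k => ψ k 0 * K (ψ k 0) - ψ k 1 * K (ψ k 1) with hβu_def
  set βv : Fin N → ℂ := fun k => ψp k 0 * K (ψp k 0) - ψp k 1 * K (ψp k 1) with hβv_def
  set wq : Fin N → ℂ := fun k => ψp k 0 * K (ψ k 0) - ψp k 1 * K (ψ k 1) with hwq_def
  -- the main vanishing identity
  have main : ∀ σ : Fin N → Fin 2 → ℂ, (∃ k, σ k 0 + σ k 1 = 0) →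
      ∑ j, ∑ j', (e j * K (e j')) * ∏ i, ∑ b, σ i b * (w j i b * K (w j' i b)) = 0 := by
    rintro σ ⟨k, hk⟩
    rw [← key_expand]
    have h2 : ∀ x : Fin N → Fin 2,
        (∏ i, σ i (x i)) * ((∑ j, e j * ∏ i, w j i (x i)) * K (∑ j, e j * ∏ i, w j i (x i)))
        = C * ∏ i, σ i (x i) := by
      intro x
      rw [hS x]
      ring
    rw [Finset.sum_congr rfl fun x _ => h2 x]
    rw [← Finset.mul_sum]
    have h3 : ∑ x : Fin N → Fin 2, ∏ i, σ i (x i) = 0 := by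
      rw [← Fintype.piFinset_univ, ← Finset.prod_univ_sum (fun _ => (univ : Finset (Fin 2)))]
      apply Finset.prod_eq_zero (Finset.mem_univ k)
      rw [Fin.sum_univ_two, hk]
    rw [h3, mul_zero]
  -- orthogonality consequences on second column
  have hcol : ∀ k, Complex.normSq (ψp k 0) = Complex.normSq (ψ k 1) ∧
      Complex.normSq (ψp k 1) = Complex.normSq (ψ k 0) := by
    intro k
    have ha : Complex.normSq (ψ k 0) + Complex.normSq (ψ k 1) = 1 := by
      have := hψ k
      rw [Complex.mul_conj, Complex.mul_conj] at this
      exact_mod_cast this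
    have hc : Complex.normSq (ψp k 0) + Complex.normSq (ψp k 1) = 1 := by
      have := hψp k
      rw [Complex.mul_conj, Complex.mul_conj] at this
      exact_mod_cast this
    have hprod : Complex.normSq (ψ k 0) * Complex.normSq (ψp k 0)
        = Complex.normSq (ψ k 1) * Complex.normSq (ψp k 1) := by
      have h2 : K (ψ k 0) * ψp k 0 = -(K (ψ k 1) * ψp k 1) := by linear_combination horth k
      have h3 := congrArg Complex.normSq h2
      simpa [hK, Complex.normSq_mul, Complex.normSq_conj] using h3
    have hb : Complex.normSq (ψ k 1) = 1 - Complex.normSq (ψ k 0) := by linarith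
    have hd : Complex.normSq (ψp k 1) = 1 - Complex.normSq (ψp k 0) := by linarith
    rw [hb, hd] at hprod
    have hac : Complex.normSq (ψ k 0) + Complex.normSq (ψp k 0) = 1 := by
      linear_combination hprod
    constructor <;> [linarith; linarith]
  
  -- conjugated orthogonality
  have horthc : ∀ i, ψ i 0 * K (ψp i 0) + ψ i 1 * K (ψp i 1) = 0 := by
    intro i
    have h2 := congrArg K (horth i)
    simpa [hK, map_add, map_mul, RingHom.map_zero] using h2
  have horthm : ∀ i, ψp i 0 * K (ψ i 0) + ψp i 1 * K (ψ i 1) = 0 := by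
    intro i; linear_combination horth i
  -- relation between βu and βv
  have hβorth : ∀ k, βv k = -βu k := by
    intro k
    have h := hcol k
    simp only [hβv_def, hβu_def, hK, Complex.mul_conj]
    have : (Complex.normSq (ψp k 0) - Complex.normSq (ψp k 1) : ℝ)
        = -(Complex.normSq (ψ k 0) - Complex.normSq (ψ k 1)) := by
      rw [h.1, h.2]; ring
    push_cast at this ⊢
    exact_mod_cast this
  -- Step A : βu k = 0 for all k
  have stepA : ∀ k, (βv k - βu k) + N * βu k = 0 := by
    intro k
    have hmain := main (fun i b => if i = k then sg b else 1)
      ⟨k, by simp [hsg]⟩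
    have hoff : ∀ j j' : Fin N, j ≠ j' →
        (∏ i, ∑ b, (if i = k then sg b else 1) *
          ((if i = j then ψp i b else ψ i b) * K (if i = j' then ψp i b else ψ i b))) = 0 := by
      intro j j' hjj
      by_cases hjk : j = k
      · have hj'k : j' ≠ k := fun h => hjj (by rw [hjk, h])
        have hj'j : j' ≠ j := fun h => hjj h.symm
        apply Finset.prod_eq_zero (Finset.mem_univ j')
        simp only [if_neg hj'k, if_neg hj'j, eq_self_iff_true, if_true, one_mul]
        rw [Fin.sum_univ_two]
        exact horthc j'
      · have hjj' : j ≠ j' := hjj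
        apply Finset.prod_eq_zero (Finset.mem_univ j)
        simp only [if_neg hjk, if_neg hjj', eq_self_iff_true, if_true, one_mul]
        rw [Fin.sum_univ_two]
        exact horthm j
    have hdiag : ∀ j : Fin N,
        (∏ i, ∑ b, (if i = k then sg b else 1) *
          ((if i = j then ψp i b else ψ i b) * K (if i = j then ψp i b else ψ i b)))
        = (if k = j then βv k else βu k) := by
      intro j
      rw [Finset.prod_eq_single k]
      · by_cases hkj : k = j
        · simp only [eq_self_iff_true, if_true, if_pos hkj]
          rw [Fin.sum_univ_two]
          simp only [hsg, hβv_def, eq_self_iff_true, if_true, if_neg (one_ne_zero' (Fin 2))]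
          ring
        · simp only [eq_self_iff_true, if_true, if_neg hkj]
          rw [Fin.sum_univ_two]
          simp only [hsg, hβu_def, eq_self_iff_true, if_true, if_neg (one_ne_zero' (Fin 2))]
          ring
      · intro i _ hik
        simp only [if_neg hik, one_mul]
        rw [Fin.sum_univ_two]
        by_cases hij : i = j
        · simp only [if_pos hij]; exact hψp i
        · simp only [if_neg hij]; exact hψ i
      · intro h; exact absurd (Finset.mem_univ k) h
    have h4 : ∀ j : Fin N,
        (∑ j', (e j * K (e j')) *
          ∏ i, ∑ b, (if i = k then sg b else 1) *
            ((if i = j then ψp i b else ψ i b) * K (if i = j' then ψp i b else ψ i b)))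
        = (if k = j then βv k else βu k) := by
      intro j
      rw [Finset.sum_eq_single j]
      · rw [hdiag j, he j, one_mul]
      · intro j' _ hj'j
        rw [hoff j j' (fun h => hj'j h.symm), mul_zero]
      · intro h; exact absurd (Finset.mem_univ j) h
    have h5 : ∑ j : Fin N, (if k = j then βv k else βu k) = 0 := by
      rw [← hmain]
      exact Finset.sum_congr rfl fun j _ => (h4 j).symm
    rw [sum_ite_const] at h5
    exact h5
  have hβu0 : ∀ k, βu k = 0 := by
    intro k
    have h := stepA k
    rw [hβorth k] at h
    have h2 : ((N : ℂ) - 2) * βu k = 0 := by linear_combination h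
    rcases mul_eq_zero.mp h2 with h3 | h3
    · exfalso
      have h4 : (N : ℂ) = 2 := by linear_combination h3
      have h5 : N = 2 := by exact_mod_cast h4
      omega
    · exact h3
  have hβv0 : ∀ k, βv k = 0 := fun k => by rw [hβorth k, hβu0 k, neg_zero]
  -- nonvanishing of first components
  have hu0 : ∀ k, ψ k 0 ≠ 0 ∧ ψp k 0 ≠ 0 := by
    intro k
    have ha : Complex.normSq (ψ k 0) + Complex.normSq (ψ k 1) = 1 := by
      have := hψ k
      rw [hK] at this
      rw [Complex.mul_conj, Complex.mul_conj] at this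
      exact_mod_cast this
    have hab : Complex.normSq (ψ k 0) = Complex.normSq (ψ k 1) := by
      have h := hβu0 k
      simp only [hβu_def, hK, Complex.mul_conj] at h
      have h2 : ((Complex.normSq (ψ k 0) : ℝ) : ℂ) = ((Complex.normSq (ψ k 1) : ℝ) : ℂ) := by
        linear_combination h
      exact_mod_cast h2
    have h01 : Complex.normSq (ψ k 0) = 1/2 := by linarith
    have h02 : Complex.normSq (ψp k 0) = 1/2 := by rw [(hcol k).1]; linarith
    constructor
    · intro h; rw [h, Complex.normSq_zero] at h01; norm_num at h01
    · intro h; rw [h, Complex.normSq_zero] at h02; norm_num at h02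
  have hwqne : ∀ k, wq k ≠ 0 := by
    intro k
    have h2 : wq k = 2 * (ψp k 0 * K (ψ k 0)) := by
      simp only [hwq_def]
      linear_combination -(horthm k)
    rw [h2]
    have hKne : K (ψ k 0) ≠ 0 := by
      intro h
      have := congrArg K h
      simp only [hK, Complex.conj_conj, map_zero] at this
      exact (hu0 k).1 this
    exact mul_ne_zero two_ne_zero (mul_ne_zero (hu0 k).2 hKne)
  -- Step B
  have stepB : ∀ k l : Fin N, k ≠ l →
      (e k * K (e l)) * (wq k * K (wq l)) + (e l * K (e k)) * (K (wq k) * wq l) = 0 := by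
    intro k l hkl
    have hmain := main (fun i b => if i = k ∨ i = l then sg b else 1)
      ⟨k, by simp [hsg]⟩
    -- diagonal terms vanish
    have hdiagb : ∀ j : Fin N,
        (∏ i, ∑ b, (if i = k ∨ i = l then sg b else 1) *
          ((if i = j then ψp i b else ψ i b) * K (if i = j then ψp i b else ψ i b))) = 0 := by
      intro j
      apply Finset.prod_eq_zero (Finset.mem_univ k)
      simp only [eq_self_iff_true, true_or, if_true]
      rw [Fin.sum_univ_two, hsg0, hsg1]
      by_cases hkj : k = j
      · simp only [if_pos hkj]
        have h := hβv0 k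
        simp only [hβv_def] at h
        linear_combination h
      · simp only [if_neg hkj]
        have h := hβu0 k
        simp only [hβu_def] at h
        linear_combination h
    -- generic off-diagonal terms vanish
    have hoffb : ∀ j j' : Fin N, j ≠ j' → ¬(j = k ∧ j' = l) → ¬(j = l ∧ j' = k) →
        (∏ i, ∑ b, (if i = k ∨ i = l then sg b else 1) *
          ((if i = j then ψp i b else ψ i b) * K (if i = j' then ψp i b else ψ i b))) = 0 := by
      intro j j' hjj hex1 hex2
      by_cases hj : j ≠ k ∧ j ≠ l
      · apply Finset.prod_eq_zero (Finset.mem_univ j)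
        have hcond : ¬(j = k ∨ j = l) := by tauto
        simp only [if_neg hcond, if_neg hjj, eq_self_iff_true, if_true, one_mul]
        rw [Fin.sum_univ_two]
        exact horthm j
      · apply Finset.prod_eq_zero (Finset.mem_univ j')
        have hj'j : j' ≠ j := fun h => hjj h.symm
        have hj2 : j = k ∨ j = l := by tauto
        have hcond : ¬(j' = k ∨ j' = l) := by
          rintro (h1 | h1)
          · rcases hj2 with h | h
            · exact hj'j (h1.trans h.symm)
            · exact hex2 ⟨h, h1⟩
          · rcases hj2 with h | h
            · exact hex1 ⟨h, h1⟩
            · exact hj'j (h1.trans h.symm)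
        simp only [if_neg hcond, if_neg hj'j, eq_self_iff_true, if_true, one_mul]
        rw [Fin.sum_univ_two]
        exact horthc j'
    -- the two surviving cross terms
    have hlk : l ≠ k := fun h => hkl h.symm
    have hcross1 :
        (∏ i, ∑ b, (if i = k ∨ i = l then sg b else 1) *
          ((if i = k then ψp i b else ψ i b) * K (if i = l then ψp i b else ψ i b)))
        = wq k * K (wq l) := by
      rw [← Finset.prod_subset (Finset.subset_univ ({k, l} : Finset (Fin N))) ?_]
      · rw [Finset.prod_pair hkl]
        congr 1
        · simp only [eq_self_iff_true, true_or, if_true, if_neg hkl]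
          rw [Fin.sum_univ_two, hsg0, hsg1]
          simp only [hwq_def]
          ring
        · simp only [eq_self_iff_true, or_true, if_true, if_neg hlk]
          rw [Fin.sum_univ_two, hsg0, hsg1]
          simp only [hwq_def, hK, map_sub, map_mul, Complex.conj_conj]
          ring
      · intro i _ hi
        simp only [Finset.mem_insert, Finset.mem_singleton] at hi
        push_neg at hi
        have hcond : ¬(i = k ∨ i = l) := by tauto
        simp only [if_neg hcond, if_neg hi.1, if_neg hi.2, one_mul]
        rw [Fin.sum_univ_two]
        exact hψ i
    have hcross2 :
        (∏ i, ∑ b, (if i = k ∨ i = l then sg b else 1) *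
          ((if i = l then ψp i b else ψ i b) * K (if i = k then ψp i b else ψ i b)))
        = K (wq k) * wq l := by
      rw [← Finset.prod_subset (Finset.subset_univ ({k, l} : Finset (Fin N))) ?_]
      · rw [Finset.prod_pair hkl]
        congr 1
        · simp only [eq_self_iff_true, true_or, if_true, if_neg hkl]
          rw [Fin.sum_univ_two, hsg0, hsg1]
          simp only [hwq_def, hK, map_sub, map_mul, Complex.conj_conj]
          ring
        · simp only [eq_self_iff_true, or_true, if_true, if_neg hlk]
          rw [Fin.sum_univ_two, hsg0, hsg1]
          simp only [hwq_def]
          ring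
      · intro i _ hi
        simp only [Finset.mem_insert, Finset.mem_singleton] at hi
        push_neg at hi
        have hcond : ¬(i = k ∨ i = l) := by tauto
        simp only [if_neg hcond, if_neg hi.1, if_neg hi.2, one_mul]
        rw [Fin.sum_univ_two]
        exact hψ i
    -- collapse the double sum
    have h4 : ∀ j : Fin N,
        (∑ j', (e j * K (e j')) *
          ∏ i, ∑ b, (if i = k ∨ i = l then sg b else 1) *
            ((if i = j then ψp i b else ψ i b) * K (if i = j' then ψp i b else ψ i b)))
        = (if j = k then (e k * K (e l)) * (wq k * K (wq l))
            else if j = l then (e l * K (e k)) * (K (wq k) * wq l) else 0) := by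
      intro j
      by_cases hjk : j = k
      · subst hjk
        rw [Finset.sum_eq_single l]
        · rw [hcross1, if_pos rfl]
        · intro j' _ hj'l
          by_cases hj'j : j' = j
          · subst hj'j; rw [hdiagb j', mul_zero]
          · rw [hoffb j j' (fun h => hj'j h.symm)
              (fun h => hj'l h.2) (fun h => hkl h.1), mul_zero]
        · intro h; exact absurd (Finset.mem_univ l) h
      · by_cases hjl : j = l
        · subst hjl
          rw [Finset.sum_eq_single k]
          · rw [hcross2, if_neg hjk, if_pos rfl]
          · intro j' _ hj'k
            by_cases hj'j : j' = j
            · subst hj'j; rw [hdiagb j', mul_zero]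
            · rw [hoffb j j' (fun h => hj'j h.symm)
                (fun h => hjk h.1) (fun h => hj'k h.2), mul_zero]
          · intro h; exact absurd (Finset.mem_univ k) h
        · rw [if_neg hjk, if_neg hjl]
          apply Finset.sum_eq_zero
          intro j' _
          by_cases hj'j : j' = j
          · subst hj'j; rw [hdiagb j', mul_zero]
          · rw [hoffb j j' (fun h => hj'j h.symm)
              (fun h => hjk h.1) (fun h => hjl h.1), mul_zero]
    have h5 : ∑ j : Fin N,
        (if j = k then (e k * K (e l)) * (wq k * K (wq l))
          else if j = l then (e l * K (e k)) * (K (wq k) * wq l) else 0) = 0 := by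
      refine Eq.trans ?_ hmain
      exact Finset.sum_congr rfl fun j _ => (h4 j).symm
    have h6 : ∀ j : Fin N,
        (if j = k then (e k * K (e l)) * (wq k * K (wq l))
          else if j = l then (e l * K (e k)) * (K (wq k) * wq l) else 0)
        = (if j = k then (e k * K (e l)) * (wq k * K (wq l)) else 0)
          + (if j = l then (e l * K (e k)) * (K (wq k) * wq l) else 0) := by
      intro j
      by_cases hjk : j = k
      · have hjl : j ≠ l := by rw [hjk]; exact hkl
        simp only [if_pos hjk, if_neg hjl, add_zero]
      · by_cases hjl : j = l
        · simp only [if_neg hjk, if_pos hjl, zero_add]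
        · simp only [if_neg hjk, if_neg hjl, add_zero]
    simp only [h6, Finset.sum_add_distrib, Finset.sum_ite_eq', Finset.mem_univ, if_true] at h5
    exact h5
  -- final contradiction from three pairwise "orthogonal" nonzero complex numbers
  have hpair : ∀ a b : Fin N, a ≠ b →
      (e a * wq a) * K (e b * wq b) + (e b * wq b) * K (e a * wq a) = 0 := by
    intro a b hab
    have h := stepB a b hab
    simp only [hK, map_mul] at h ⊢
    linear_combination h
  have hWne : ∀ j : Fin N, e j * wq j ≠ 0 := fun j => mul_ne_zero (hne j) (hwqne j)
  have h0N : (0 : ℕ) < N := by omega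
  have h1N : (1 : ℕ) < N := by omega
  have h2N : (2 : ℕ) < N := by omega
  set k0 : Fin N := ⟨0, h0N⟩
  set k1 : Fin N := ⟨1, h1N⟩
  set k2 : Fin N := ⟨2, h2N⟩
  have h10 : k1 ≠ k0 := Fin.ne_of_val_ne (by norm_num)
  have h20 : k2 ≠ k0 := Fin.ne_of_val_ne (by norm_num)
  have h12 : k1 ≠ k2 := Fin.ne_of_val_ne (by norm_num)
  exact no_three (e k0 * wq k0) (e k1 * wq k1) (e k2 * wq k2)
    (hWne k0) (hWne k1) (hWne k2)
    (hpair k1 k0 h10) (hpair k2 k0 h20) (hpair k1 k2 h12)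

/-- For `N ≥ 3`, no `N`-qubit W-type state
`|W⟩ = (1/√N) Σ_j e^{iφ_j} |ψ_1⟩⋯|ψ_j^⊥⟩⋯|ψ_N⟩`, where `{|ψ_i⟩, |ψ_i^⊥⟩}` is an
orthonormal basis of each qubit, is maximally coherent in the computational basis:
its computational-basis coefficients cannot all have modulus `1/√(2^N)`. -/
theorem w_state_not_maximally_coherent (N : ℕ) (hN : 3 ≤ N)
    (ψ ψp : Fin N → Fin 2 → ℂ) (φ : Fin N → ℝ)
    (hψ : ∀ i, ∑ b, ‖ψ i b‖ ^ 2 = 1) (hψp : ∀ i, ∑ b, ‖ψp i b‖ ^ 2 = 1)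
    (horth : ∀ i, ∑ b, star (ψ i b) * ψp i b = 0) :
    ¬ ∀ x : Fin N → Fin 2,
        ‖((Real.sqrt N : ℝ) : ℂ)⁻¹ *
            ∑ j, Complex.exp ((φ j : ℂ) * Complex.I) *
              ∏ i, (if i = j then ψp i (x i) else ψ i (x i))‖
          = (Real.sqrt (2 ^ N))⁻¹ := by
  intro hflat
  have hns : ∀ z : ℂ, z * (starRingEnd ℂ) z = ((‖z‖ ^ 2 : ℝ) : ℂ) := fun z => by
    rw [Complex.mul_conj, Complex.sq_norm]
  have hsqrtN : (0 : ℝ) < Real.sqrt N := by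
    apply Real.sqrt_pos.mpr
    have : (0 : ℕ) < N := by omega
    exact_mod_cast this
  set t : ℝ := Real.sqrt N * (Real.sqrt (2 ^ N))⁻¹ with ht
  have hψ2 : ∀ i, ψ i 0 * (starRingEnd ℂ) (ψ i 0) + ψ i 1 * (starRingEnd ℂ) (ψ i 1) = 1 := by
    intro i
    have h := hψ i
    rw [Fin.sum_univ_two] at h
    rw [hns, hns]
    exact_mod_cast congrArg (fun r : ℝ => (r : ℂ)) h
  have hψp2 : ∀ i, ψp i 0 * (starRingEnd ℂ) (ψp i 0) + ψp i 1 * (starRingEnd ℂ) (ψp i 1) = 1 := by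
    intro i
    have h := hψp i
    rw [Fin.sum_univ_two] at h
    rw [hns, hns]
    exact_mod_cast congrArg (fun r : ℝ => (r : ℂ)) h
  have horth2 : ∀ i, (starRingEnd ℂ) (ψ i 0) * ψp i 0 + (starRingEnd ℂ) (ψ i 1) * ψp i 1 = 0 := by
    intro i
    have h := horth i
    rw [Fin.sum_univ_two] at h
    exact h
  have he : ∀ j : Fin N, Complex.exp ((φ j : ℂ) * Complex.I) *
      (starRingEnd ℂ) (Complex.exp ((φ j : ℂ) * Complex.I)) = 1 := by
    intro j
    rw [hns]
    rw [Complex.norm_exp_ofReal_mul_I]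
    norm_num
  have hne : ∀ j : Fin N, Complex.exp ((φ j : ℂ) * Complex.I) ≠ 0 :=
    fun j => Complex.exp_ne_zero _
  have hS : ∀ x : Fin N → Fin 2,
      (∑ j, Complex.exp ((φ j : ℂ) * Complex.I) *
          ∏ i, (if i = j then ψp i (x i) else ψ i (x i))) *
        (starRingEnd ℂ) (∑ j, Complex.exp ((φ j : ℂ) * Complex.I) *
          ∏ i, (if i = j then ψp i (x i) else ψ i (x i))) = ((t ^ 2 : ℝ) : ℂ) := by
    intro x
    rw [hns]
    have h := hflat x
    rw [norm_mul] at h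
    have h2 : ‖(((Real.sqrt N : ℝ)) : ℂ)⁻¹‖ = (Real.sqrt N)⁻¹ := by
      rw [norm_inv, Complex.norm_real, Real.norm_eq_abs, abs_of_pos hsqrtN]
    rw [h2] at h
    have h3 : ‖∑ j, Complex.exp ((φ j : ℂ) * Complex.I) *
        ∏ i, (if i = j then ψp i (x i) else ψ i (x i))‖ = t := by
      rw [ht]
      rw [← h, ← mul_assoc, mul_inv_cancel₀ hsqrtN.ne', one_mul]
    rw [h3]
  exact w_aux N hN ψ ψp (fun j => Complex.exp ((φ j : ℂ) * Complex.I)) ((t ^ 2 : ℝ) : ℂ)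
    hψ2 hψp2 horth2 he hne hS
end
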